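/- arXiv:2105.08890 — 13 statements merged into one kernel-verified Lean document; each statement's English description precedes it below -/
import Mathlib

section
/- Let D ⊆ V₀ and f : D → ℝ. For i = 1, 2 let Lᵢ be the horizontal line through pᵢ ∈ ℍ with direction (1, mᵢ, 0), parametrized by λᵢ(t) = pᵢ·((t − x(pᵢ))·(1, mᵢ, 0)) so that the x-coordinate of λᵢ(t) is t, let Iᵢ ⊆ ℝ be an interval, and suppose λᵢ(t) ∈ Γ_f for every t ∈ Iᵢ. Let gᵢ : ℝ → ℝ be the (quadratic) function such that Π(λᵢ(t)) = (t, 0, gᵢ(t)) for all t. If L₁ ≠ L₂, then either g₁(t) ≤ g₂(t) for all t ∈ I₁ ∩ I₂, or g₁(t) ≥ g₂(t) for all t ∈ I₁ ∩ I₂. -/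
open MeasureTheory Filter

noncomputable section

/-- The Heisenberg group, identified with `ℝ³`. -/
abbrev H : Type := ℝ × ℝ × ℝ

/-- Heisenberg group multiplication. -/
def Hmul (p q : H) : H :=
  (p.1 + q.1, p.2.1 + q.2.1, p.2.2 + q.2.2 + (p.1 * q.2.1 - p.2.1 * q.1) / 2)

/-- The intrinsic projection `Π : ℍ → V₀`. -/
def Proj (p : H) : H := (p.1, 0, p.2.2 - p.1 * p.2.1 / 2)

/-- The `xz`-plane `V₀`. -/
def V0 : Set H := {p : H | p.2.1 = 0}

/-- The intrinsic graph of `f` over `D ⊆ V₀`. -/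
def IGraph (D : Set H) (f : H → ℝ) : Set H :=
  {q : H | ∃ x z : ℝ, ((x, (0 : ℝ), z) ∈ D) ∧
    q = (x, f (x, 0, z), z + x * f (x, 0, z) / 2)}

/-- ordering of projections of two rulings of an intrinsic graph.
If `L₁ ≠ L₂` are horizontal lines, `λᵢ` parametrizes `Lᵢ` by the `x`-coordinate,
`λᵢ(t) ∈ Γ_f` for `t` in an interval `Iᵢ`, and `Π(λᵢ(t)) = (t, 0, gᵢ(t))`, then
`g₁ ≤ g₂` on `I₁ ∩ I₂` or `g₁ ≥ g₂` on `I₁ ∩ I₂`. -/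
theorem ordering_rulings
    (D : Set H) (hD : D ⊆ V0) (f : H → ℝ)
    (p₁ p₂ : H) (m₁ m₂ : ℝ)
    (lam₁ lam₂ : ℝ → H)
    (hlam₁ : ∀ t : ℝ, lam₁ t = Hmul p₁ ((t - p₁.1) * 1, (t - p₁.1) * m₁, 0))
    (hlam₂ : ∀ t : ℝ, lam₂ t = Hmul p₂ ((t - p₂.1) * 1, (t - p₂.1) * m₂, 0))
    (I₁ I₂ : Set ℝ) (hI₁ : I₁.OrdConnected) (hI₂ : I₂.OrdConnected)
    (hmem₁ : ∀ t ∈ I₁, lam₁ t ∈ IGraph D f)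
    (hmem₂ : ∀ t ∈ I₂, lam₂ t ∈ IGraph D f)
    (g₁ g₂ : ℝ → ℝ)
    (hg₁ : ∀ t : ℝ, Proj (lam₁ t) = (t, 0, g₁ t))
    (hg₂ : ∀ t : ℝ, Proj (lam₂ t) = (t, 0, g₂ t))
    (hne : Set.range lam₁ ≠ Set.range lam₂) :
    (∀ t ∈ I₁ ∩ I₂, g₁ t ≤ g₂ t) ∨ (∀ t ∈ I₁ ∩ I₂, g₂ t ≤ g₁ t) := by

  -- Explicit quadratic formulas for g₁ and g₂.
  have hg1' : ∀ t : ℝ, g₁ t =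
      p₁.2.2 + 0 + (p₁.1 * ((t - p₁.1) * m₁) - p₁.2.1 * ((t - p₁.1) * 1)) / 2
        - (p₁.1 + (t - p₁.1) * 1) * (p₁.2.1 + (t - p₁.1) * m₁) / 2 := by
    intro t
    have h := hg₁ t
    rw [hlam₁ t] at h
    have h3 := congrArg (fun q : H => q.2.2) h
    simp only [Proj, Hmul] at h3
    linarith [h3]
  have hg2' : ∀ t : ℝ, g₂ t =
      p₂.2.2 + 0 + (p₂.1 * ((t - p₂.1) * m₂) - p₂.2.1 * ((t - p₂.1) * 1)) / 2
        - (p₂.1 + (t - p₂.1) * 1) * (p₂.2.1 + (t - p₂.1) * m₂) / 2 := by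
    intro t
    have h := hg₂ t
    rw [hlam₂ t] at h
    have h3 := congrArg (fun q : H => q.2.2) h
    simp only [Proj, Hmul] at h3
    linarith [h3]
  -- If the projections agree at a common parameter, the points agree.
  have key : ∀ t ∈ I₁ ∩ I₂, g₁ t = g₂ t → lam₁ t = lam₂ t := by
    intro t ht hgt
    obtain ⟨x₁, z₁, hx₁D, he₁⟩ := hmem₁ t ht.1
    obtain ⟨x₂, z₂, hx₂D, he₂⟩ := hmem₂ t ht.2
    have q₁ : ((x₁ : ℝ), (0 : ℝ), z₁) = ((t : ℝ), (0 : ℝ), g₁ t) := by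
      rw [← hg₁ t, he₁]
      simp only [Proj]
      refine Prod.ext rfl (Prod.ext rfl ?_)
      ring
    have q₂ : ((x₂ : ℝ), (0 : ℝ), z₂) = ((t : ℝ), (0 : ℝ), g₂ t) := by
      rw [← hg₂ t, he₂]
      simp only [Proj]
      refine Prod.ext rfl (Prod.ext rfl ?_)
      ring
    have hx1 : x₁ = t := congrArg Prod.fst q₁
    have hz1 : z₁ = g₁ t := congrArg (fun p : H => p.2.2) q₁
    have hx2 : x₂ = t := congrArg Prod.fst q₂
    have hz2 : z₂ = g₂ t := congrArg (fun p : H => p.2.2) q₂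
    rw [he₁, he₂, hx1, hz1, hx2, hz2, hgt]
  by_contra hcon
  push_neg at hcon
  obtain ⟨⟨s, hs, hs'⟩, ⟨u, hu, hu'⟩⟩ := hcon
  -- continuity of g₁ - g₂
  have hcont : Continuous fun t => g₁ t - g₂ t := by
    have hfun : (fun t => g₁ t - g₂ t) = fun t =>
        (p₁.2.2 + 0 + (p₁.1 * ((t - p₁.1) * m₁) - p₁.2.1 * ((t - p₁.1) * 1)) / 2
          - (p₁.1 + (t - p₁.1) * 1) * (p₁.2.1 + (t - p₁.1) * m₁) / 2)
        - (p₂.2.2 + 0 + (p₂.1 * ((t - p₂.1) * m₂) - p₂.2.1 * ((t - p₂.1) * 1)) / 2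
          - (p₂.1 + (t - p₂.1) * 1) * (p₂.2.1 + (t - p₂.1) * m₂) / 2) := by
      funext t; rw [hg1' t, hg2' t]
    rw [hfun]
    fun_prop
  have hsub : Set.uIcc s u ⊆ I₁ ∩ I₂ := (hI₁.inter hI₂).uIcc_subset hs hu
  have h0 : (0 : ℝ) ∈ Set.uIcc ((fun t => g₁ t - g₂ t) s) ((fun t => g₁ t - g₂ t) u) := by
    rw [Set.mem_uIcc]
    right
    constructor <;> simp only [] <;> linarith
  obtain ⟨t₀, ht₀mem, ht₀⟩ := intermediate_value_uIcc hcont.continuousOn h0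
  have ht₀I : t₀ ∈ I₁ ∩ I₂ := hsub ht₀mem
  have hgeq : g₁ t₀ = g₂ t₀ := by
    simp only [] at ht₀; linarith
  have eqpt : lam₁ t₀ = lam₂ t₀ := key t₀ ht₀I hgeq
  rw [hlam₁ t₀, hlam₂ t₀] at eqpt
  have ey : p₁.2.1 + (t₀ - p₁.1) * m₁ = p₂.2.1 + (t₀ - p₂.1) * m₂ :=
    congrArg (fun q : H => q.2.1) eqpt
  have ez : p₁.2.2 + 0 + (p₁.1 * ((t₀ - p₁.1) * m₁) - p₁.2.1 * ((t₀ - p₁.1) * 1)) / 2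
      = p₂.2.2 + 0 + (p₂.1 * ((t₀ - p₂.1) * m₂) - p₂.2.1 * ((t₀ - p₂.1) * 1)) / 2 :=
    congrArg (fun q : H => q.2.2) eqpt
  rcases eq_or_ne m₁ m₂ with hm | hm
  · -- same slope: the two lines coincide, contradicting hne
    subst hm
    apply hne
    have : lam₁ = lam₂ := by
      funext t
      rw [hlam₁ t, hlam₂ t]
      simp only [Hmul]
      refine Prod.ext (by ring) (Prod.ext ?_ ?_)
      · linear_combination ey
      · linear_combination ez - ((t - t₀) / 2) * ey
    rw [this]
  · -- distinct slopes: g₁ - g₂ is a definite quadratic, contradiction with sign change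
    have hid : ∀ t : ℝ, g₁ t - g₂ t = (m₂ - m₁) / 2 * (t - t₀) ^ 2 := by
      intro t
      rw [hg1' t, hg2' t]
      linear_combination ez - (t - t₀ / 2) * ey
    have hcneg : (m₂ - m₁) / 2 < 0 := by
      nlinarith [hid u, sq_nonneg (u - t₀)]
    nlinarith [hid s, sq_nonneg (s - t₀)]
end
end

section
/- Let α : ℝ → ℝ be continuous, η(w) = w + α(w)/2, and let S_α be as defined. Then there exists a continuous function f : K → ℝ with Γ_f = S_α if and only if α(w₂) − α(w₁) ≥ −2(w₂ − w₁) for all w₁ < w₂ and η : ℝ → ℝ is surjective. -/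
open MeasureTheory Filter

noncomputable section

/-- Heisenberg group inverse. -/
def Hinv (p : H) : H := (-p.1, -p.2.1, -p.2.2)

/-- The strip `K = {(x,0,z) : −1 ≤ x ≤ 1}` in `V₀`. -/
def K : Set H := {p : H | p.2.1 = 0 ∧ -1 ≤ p.1 ∧ p.1 ≤ 1}

/-- The ruled surface `S_α = ⋃_w [(−1, −α(w), η(w)), (1, α(w), η(w))]`
where `η(w) = w + α(w)/2`. -/
def Salpha (α : ℝ → ℝ) : Set H :=
  ⋃ w : ℝ, segment ℝ ((-1, -α w, w + α w / 2) : H) ((1, α w, w + α w / 2) : H)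

namespace StripAux

lemma mem_Salpha_iff (α : ℝ → ℝ) (q : H) :
    q ∈ Salpha α ↔ ∃ w t : ℝ, -1 ≤ t ∧ t ≤ 1 ∧ q = (t, t * α w, w + α w / 2) := by
  simp only [Salpha, Set.mem_iUnion]
  constructor
  · rintro ⟨w, hq⟩
    rw [segment_eq_image] at hq
    obtain ⟨θ, ⟨h0, h1⟩, hθ⟩ := hq
    refine ⟨w, 2*θ - 1, by linarith, by linarith, ?_⟩
    rw [← hθ]
    simp only [Prod.smul_def, smul_eq_mul, Prod.mk_add_mk, Prod.mk.injEq]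
    refine ⟨by ring, by ring, by ring⟩
  · rintro ⟨w, t, h0, h1, rfl⟩
    refine ⟨w, ?_⟩
    rw [segment_eq_image]
    refine ⟨(t+1)/2, ⟨by linarith, by linarith⟩, ?_⟩
    simp only [Prod.smul_def, smul_eq_mul, Prod.mk_add_mk, Prod.mk.injEq]
    refine ⟨by ring, by ring, by ring⟩

variable (α : ℝ → ℝ)

def phi (x w : ℝ) : ℝ := x^2 * w + (1 - x^2) * (w + α w / 2)

lemma phi_eq (x w : ℝ) : phi α x w = w + (1 - x^2) * α w / 2 := by
  unfold phi; ring

variable {α}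

lemma phi_mono (hmono : Monotone fun w => w + α w / 2) {x : ℝ} (hx : x^2 ≤ 1) :
    Monotone (phi α x) := by
  intro a b hab
  have h := hmono hab
  simp only at h
  have h1 : x^2 * a ≤ x^2 * b := mul_le_mul_of_nonneg_left hab (sq_nonneg x)
  have h2 : (1 - x^2) * (a + α a / 2) ≤ (1 - x^2) * (b + α b / 2) :=
    mul_le_mul_of_nonneg_left h (by linarith)
  unfold phi; linarith

lemma phi_strictMono (hmono : Monotone fun w => w + α w / 2) {x : ℝ}
    (hx : x^2 ≤ 1) (hx0 : x ≠ 0) : StrictMono (phi α x) := by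
  intro a b hab
  have h := hmono hab.le
  simp only at h
  have hx2 : 0 < x^2 := by positivity
  have h1 : x^2 * a < x^2 * b := by nlinarith
  have h2 : (1 - x^2) * (a + α a / 2) ≤ (1 - x^2) * (b + α b / 2) :=
    mul_le_mul_of_nonneg_left h (by linarith)
  unfold phi; linarith

lemma min_le_phi {x w : ℝ} (hx : x^2 ≤ 1) :
    min w (w + α w / 2) ≤ phi α x w := by
  rcases le_total w (w + α w / 2) with h | h
  · rw [min_eq_left h]; unfold phi; nlinarith [sq_nonneg x]
  · rw [min_eq_right h]; unfold phi; nlinarith [sq_nonneg x]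

lemma phi_le_max {x w : ℝ} (hx : x^2 ≤ 1) :
    phi α x w ≤ max w (w + α w / 2) := by
  rcases le_total w (w + α w / 2) with h | h
  · rw [max_eq_right h]; unfold phi; nlinarith [sq_nonneg x]
  · rw [max_eq_left h]; unfold phi; nlinarith [sq_nonneg x]

lemma eta_tendsto_atTop (hmono : Monotone fun w => w + α w / 2)
    (hsurj : Function.Surjective fun w => w + α w / 2) :
    Tendsto (fun w => w + α w / 2) atTop atTop := by
  apply tendsto_atTop_atTop_of_monotone hmono
  intro b; obtain ⟨w, hw⟩ := hsurj b; exact ⟨w, hw.ge⟩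

lemma eta_tendsto_atBot (hmono : Monotone fun w => w + α w / 2)
    (hsurj : Function.Surjective fun w => w + α w / 2) :
    Tendsto (fun w => w + α w / 2) atBot atBot := by
  apply tendsto_atBot_atBot_of_monotone hmono
  intro b; obtain ⟨w, hw⟩ := hsurj b; exact ⟨w, hw.le⟩

lemma phi_continuous (hα : Continuous α) (x : ℝ) : Continuous (phi α x) := by
  unfold phi
  exact (continuous_const.mul continuous_id).add
    (continuous_const.mul (continuous_id.add (hα.div_const 2)))

lemma phi_surjective (hα : Continuous α) (hmono : Monotone fun w => w + α w / 2)
    (hsurj : Function.Surjective fun w => w + α w / 2) {x : ℝ} (hx : x^2 ≤ 1) :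
    Function.Surjective (phi α x) := by
  apply (phi_continuous hα x).surjective
  · apply tendsto_atTop_mono (fun w => min_le_phi (α := α) hx)
    rw [tendsto_atTop]
    intro b
    filter_upwards [eventually_ge_atTop b,
      (eta_tendsto_atTop hmono hsurj).eventually_ge_atTop b] with w h1 h2
    exact le_min h1 h2
  · apply tendsto_atBot_mono (fun w => phi_le_max (α := α) hx)
    rw [tendsto_atBot]
    intro b
    filter_upwards [eventually_le_atBot b,
      (eta_tendsto_atBot hmono hsurj).eventually_le_atBot b] with w h1 h2
    exact max_le h1 h2

/-- A solution `w` of `phi α x w = z`, when it exists. -/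
def Wsol (α : ℝ → ℝ) (x z : ℝ) : ℝ :=
  open Classical in
  if h : ∃ w, phi α x w = z then h.choose else 0

lemma Wsol_spec (hα : Continuous α) (hmono : Monotone fun w => w + α w / 2)
    (hsurj : Function.Surjective fun w => w + α w / 2) {x : ℝ} (hx : x^2 ≤ 1) (z : ℝ) :
    phi α x (Wsol α x z) = z := by
  have h : ∃ w, phi α x w = z := phi_surjective hα hmono hsurj hx z
  rw [Wsol, dif_pos h]
  exact h.choose_spec

/-- Bound for solutions of `phi α x w = z` with `z` near `z₀`. -/
lemma sol_bound (hmono : Monotone fun w => w + α w / 2)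
    (hsurj : Function.Surjective fun w => w + α w / 2) (z₀ : ℝ) :
    ∃ A B : ℝ, ∀ x w z : ℝ, x^2 ≤ 1 → phi α x w = z →
      z₀ - 1 ≤ z → z ≤ z₀ + 1 → A ≤ w ∧ w ≤ B := by
  obtain ⟨b, hb⟩ := hsurj (z₀ + 2)
  obtain ⟨a, ha⟩ := hsurj (z₀ - 2)
  simp only at hb ha
  refine ⟨min a (z₀ - 2), max b (z₀ + 2), fun x w z hx hphi hz1 hz2 => ?_⟩
  constructor
  · by_contra hcon
    push_neg at hcon
    have hwa : w < a := lt_of_lt_of_le hcon (min_le_left _ _)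
    have hw2 : w < z₀ - 2 := lt_of_lt_of_le hcon (min_le_right _ _)
    have heta : w + α w / 2 ≤ z₀ - 2 := by
      have := hmono hwa.le
      simp only at this
      linarith
    have := phi_le_max (α := α) (w := w) hx
    rw [hphi] at this
    rcases max_cases w (w + α w / 2) with ⟨h1, _⟩ | ⟨h1, _⟩ <;> rw [h1] at this <;> linarith
  · by_contra hcon
    push_neg at hcon
    have hwb : b < w := lt_of_le_of_lt (le_max_left _ _) hcon
    have hw2 : z₀ + 2 < w := lt_of_le_of_lt (le_max_right _ _) hcon
    have heta : z₀ + 2 ≤ w + α w / 2 := by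
      have := hmono hwb.le
      simp only at this
      linarith
    have := min_le_phi (α := α) (w := w) hx
    rw [hphi] at this
    rcases min_cases w (w + α w / 2) with ⟨h1, _⟩ | ⟨h1, _⟩ <;> rw [h1] at this <;> linarith

end StripAux

open StripAux Topology

/-- `S_α` is a graphical strip over `K` (i.e. there is a continuous
`f : K → ℝ` with `Γ_f = S_α`) if and only if `α(w₂) − α(w₁) ≥ −2(w₂ − w₁)` for
all `w₁ < w₂` and `η(w) = w + α(w)/2` is surjective. -/
theorem strip_injectivity (α : ℝ → ℝ) (hα : Continuous α) :
    (∃ f : H → ℝ, ContinuousOn f K ∧ IGraph K f = Salpha α) ↔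
      ((∀ w₁ w₂ : ℝ, w₁ < w₂ → α w₂ - α w₁ ≥ -2 * (w₂ - w₁)) ∧
        Function.Surjective (fun w : ℝ => w + α w / 2)) := by
  constructor
  · rintro ⟨f, hf, hgraph⟩
    constructor
    · -- monotonicity condition
      intro w₁ w₂ hlt
      by_contra hcon
      push_neg at hcon
      -- η w₂ < η w₁ : find an intermediate crossing point
      set g : ℝ → ℝ := fun t => (1 - t^2) * (α w₁ - α w₂) / 2 + (w₁ - w₂) with hg
      have hgc : ContinuousOn g (Set.Icc 0 1) := by
        apply Continuous.continuousOn
        fun_prop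
      have hg0 : 0 < g 0 := by simp only [hg]; nlinarith
      have hg1 : g 1 < 0 := by simp only [hg]; nlinarith
      have : (0:ℝ) ∈ Set.Icc (g 1) (g 0) := ⟨hg1.le, hg0.le⟩
      obtain ⟨t₀, ht₀mem, ht₀⟩ := intermediate_value_Icc' zero_le_one hgc this
      have ht₀ne : t₀ ≠ 0 := by
        rintro rfl
        rw [ht₀] at hg0
        exact lt_irrefl 0 hg0
      -- the two points of S_α over the same projection
      have hP₁ : ((t₀, t₀ * α w₁, w₁ + α w₁ / 2) : H) ∈ Salpha α :=
        (mem_Salpha_iff α _).2 ⟨w₁, t₀, by linarith [ht₀mem.1], ht₀mem.2, rfl⟩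
      have hP₂ : ((t₀, t₀ * α w₂, w₂ + α w₂ / 2) : H) ∈ Salpha α :=
        (mem_Salpha_iff α _).2 ⟨w₂, t₀, by linarith [ht₀mem.1], ht₀mem.2, rfl⟩
      rw [← hgraph] at hP₁ hP₂
      obtain ⟨x₁, z₁, hK₁, he₁⟩ := hP₁
      obtain ⟨x₂, z₂, hK₂, he₂⟩ := hP₂
      simp only [Prod.mk.injEq] at he₁ he₂
      obtain ⟨hx₁, hy₁, hz₁⟩ := he₁
      obtain ⟨hx₂, hy₂, hz₂⟩ := he₂
      subst hx₁ hx₂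
      rw [← hy₁] at hz₁
      rw [← hy₂] at hz₂
      have hzz : z₁ = z₂ := by
        have hgt := ht₀
        simp only [hg] at hgt
        nlinarith
      rw [hzz] at hy₁
      have hαeq : α w₁ = α w₂ := by
        have : t₀ * α w₁ = t₀ * α w₂ := by rw [hy₁, hy₂]
        exact mul_left_cancel₀ ht₀ne this
      have : w₁ = w₂ := by
        have hgt := ht₀
        simp only [hg] at hgt
        nlinarith
      linarith
    · -- surjectivity of η
      intro z
      have hmem : ((0:ℝ), f ((0:ℝ), (0:ℝ), z), z + 0 * f ((0:ℝ), (0:ℝ), z) / 2) ∈ IGraph K f :=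
        ⟨0, z, ⟨rfl, by norm_num, by norm_num⟩, rfl⟩
      rw [hgraph, mem_Salpha_iff] at hmem
      obtain ⟨w, t, _, _, heq⟩ := hmem
      simp only [Prod.mk.injEq] at heq
      obtain ⟨ht, _, hz⟩ := heq
      refine ⟨w, ?_⟩
      simp only
      rw [← hz]
      ring
  · rintro ⟨hcond, hsurj⟩
    have hmono : Monotone fun w => w + α w / 2 := by
      intro a b hab
      simp only
      rcases eq_or_lt_of_le hab with rfl | h
      · exact le_refl _
      · have := hcond a b h
        linarith
    refine ⟨fun p => p.1 * α (Wsol α p.1 p.2.2), ?_, ?_⟩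
    · -- continuity
      intro p hp
      have hx0sq : p.1 ^ 2 ≤ 1 := by
        obtain ⟨-, h1, h2⟩ := hp; nlinarith
      rw [ContinuousWithinAt, tendsto_iff_seq_tendsto]
      intro u hu
      rw [tendsto_nhdsWithin_iff] at hu
      obtain ⟨hu1, hu2⟩ := hu
      have hx : Tendsto (fun n => (u n).1) atTop (𝓝 p.1) :=
        (continuous_fst.tendsto p).comp hu1
      have hz : Tendsto (fun n => (u n).2.2) atTop (𝓝 p.2.2) :=
        ((continuous_snd.comp continuous_snd).tendsto p).comp hu1
      have hxsq : ∀ᶠ n in atTop, (u n).1 ^ 2 ≤ 1 := by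
        filter_upwards [hu2] with n hn
        obtain ⟨-, h1, h2⟩ := hn; nlinarith
      rcases eq_or_ne p.1 0 with hx0 | hx0
      · -- x₀ = 0 : squeeze
        have hfp : p.1 * α (Wsol α p.1 p.2.2) = 0 := by rw [hx0]; ring
        show Tendsto (fun n => (u n).1 * α (Wsol α (u n).1 (u n).2.2)) atTop
          (𝓝 (p.1 * α (Wsol α p.1 p.2.2)))
        rw [hfp]
        obtain ⟨A, B, hAB⟩ := sol_bound hmono hsurj p.2.2
        obtain ⟨M, hM⟩ :=
          (isCompact_Icc (a := A) (b := B)).exists_bound_of_continuousOn hα.continuousOn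
        refine squeeze_zero_norm' (a := fun n => (max M 0 + 1) * |(u n).1|) ?_ ?_
        · have hzev : ∀ᶠ n in atTop, (u n).2.2 ∈ Metric.ball p.2.2 1 :=
            hz (Metric.ball_mem_nhds p.2.2 one_pos)
          filter_upwards [hxsq, hzev] with n h1 h2
          rw [Metric.mem_ball, Real.dist_eq, abs_sub_lt_iff] at h2
          have hspec := Wsol_spec hα hmono hsurj h1 ((u n).2.2)
          obtain ⟨hA, hB⟩ := hAB ((u n).1) _ _ h1 hspec (by linarith [h2.1, h2.2])
            (by linarith [h2.1, h2.2])
          have hMb : ‖α (Wsol α ((u n).1) ((u n).2.2))‖ ≤ M := hM _ ⟨hA, hB⟩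
          rw [Real.norm_eq_abs] at hMb ⊢
          rw [abs_mul]
          have h0 : (0:ℝ) ≤ |(u n).1| := abs_nonneg _
          have h3 : |α (Wsol α ((u n).1) ((u n).2.2))| ≤ max M 0 + 1 := by
            calc |α (Wsol α ((u n).1) ((u n).2.2))| ≤ M := hMb
              _ ≤ max M 0 + 1 := by
                have := le_max_left M 0; linarith
          calc |(u n).1| * |α (Wsol α ((u n).1) ((u n).2.2))|
              ≤ |(u n).1| * (max M 0 + 1) := by
                apply mul_le_mul_of_nonneg_left h3 h0
            _ = (max M 0 + 1) * |(u n).1| := by ring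
        · have habs : Tendsto (fun n => |(u n).1|) atTop (𝓝 |p.1|) := hx.abs
          rw [hx0, abs_zero] at habs
          have := habs.const_mul (max M 0 + 1)
          simpa using this
      · -- x₀ ≠ 0 : the solution depends continuously
        have hw₀ : phi α p.1 (Wsol α p.1 p.2.2) = p.2.2 :=
          Wsol_spec hα hmono hsurj hx0sq _
        have hwten : Tendsto (fun n => Wsol α ((u n).1) ((u n).2.2)) atTop
            (𝓝 (Wsol α p.1 p.2.2)) := by
          rw [tendsto_order]
          constructor
          · intro a ha
            have hlt : phi α p.1 a < p.2.2 := by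
              rw [← hw₀]; exact phi_strictMono hmono hx0sq hx0 ha
            have hc : Continuous (fun x : ℝ => phi α x a) := by unfold phi; fun_prop
            have hpc : Tendsto (fun n => phi α ((u n).1) a) atTop (𝓝 (phi α p.1 a)) :=
              (hc.tendsto p.1).comp hx
            have hev : ∀ᶠ n in atTop, phi α ((u n).1) a < (u n).2.2 :=
              hpc.eventually_lt hz hlt
            filter_upwards [hev, hxsq] with n h1 h2
            by_contra hcon
            push_neg at hcon
            have hspec := Wsol_spec hα hmono hsurj h2 ((u n).2.2)
            have := phi_mono hmono h2 hcon
            rw [hspec] at this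
            linarith
          · intro b hb
            have hlt : p.2.2 < phi α p.1 b := by
              rw [← hw₀]; exact phi_strictMono hmono hx0sq hx0 hb
            have hc : Continuous (fun x : ℝ => phi α x b) := by unfold phi; fun_prop
            have hpc : Tendsto (fun n => phi α ((u n).1) b) atTop (𝓝 (phi α p.1 b)) :=
              (hc.tendsto p.1).comp hx
            have hev : ∀ᶠ n in atTop, (u n).2.2 < phi α ((u n).1) b :=
              hz.eventually_lt hpc hlt
            filter_upwards [hev, hxsq] with n h1 h2
            by_contra hcon
            push_neg at hcon
            have hspec := Wsol_spec hα hmono hsurj h2 ((u n).2.2)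
            have := phi_mono hmono h2 hcon
            rw [hspec] at this
            linarith
        exact hx.mul (((hα.tendsto _)).comp hwten)
    · -- graph equality
      ext q
      simp only [IGraph, Set.mem_setOf_eq, mem_Salpha_iff]
      constructor
      · rintro ⟨x, z, ⟨-, hx1, hx2⟩, rfl⟩
        have hx : x^2 ≤ 1 := by nlinarith
        have hw := Wsol_spec hα hmono hsurj hx z
        refine ⟨Wsol α x z, x, hx1, hx2, ?_⟩
        simp only [Prod.mk.injEq, true_and, and_true, eq_self_iff_true]
        rw [phi_eq] at hw
        nlinarith [hw]
      · rintro ⟨w, t, h1, h2, rfl⟩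
        have ht : t^2 ≤ 1 := by nlinarith
        refine ⟨t, phi α t w, ⟨rfl, h1, h2⟩, ?_⟩
        rcases eq_or_ne t 0 with rfl | ht0
        · simp only [Prod.mk.injEq]
          rw [phi_eq]
          norm_num
        · have hW : Wsol α t (phi α t w) = w := by
            apply (phi_strictMono hmono ht ht0).injective
            exact Wsol_spec hα hmono hsurj ht _
          simp only [hW, Prod.mk.injEq, true_and, and_true, eq_self_iff_true]
          rw [phi_eq]
          ring
end
end

section
/- Let α : ℝ → ℝ be continuous such that S_α is a graphical strip over K, i.e., there is a continuous f : K → ℝ with Γ_f = S_α. Then the following are equivalent: (i) α(w₂) − α(w₁) ≥ −(w₂ − w₁) for all w₁ < w₂; (ii) there is a function σ : ℝ → ℝ such that −2(z₂ − z₁) ≤ σ(z₂) − σ(z₁) < 2(z₂ − z₁) for all z₁ < z₂, and S_α = ⋃_{z∈ℝ} [(−1, −σ(z), z), (1, σ(z), z)]. -/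
open MeasureTheory Filter

noncomputable section

lemma seg_end {s z c d : ℝ}
    (h : ((1 : ℝ), c, d) ∈ segment ℝ ((-1, -s, z) : H) ((1, s, z) : H)) :
    c = s ∧ d = z := by
  rcases h with ⟨a, b, ha, hb, hab, heq⟩
  have h1 := congrArg Prod.fst heq
  have h2 := congrArg (fun p : H => p.2.1) heq
  have h3 := congrArg (fun p : H => p.2.2) heq
  simp [smul_eq_mul] at h1 h2 h3
  have ha0 : a = 0 := by linarith
  have hb1 : b = 1 := by linarith
  subst ha0 hb1
  constructor <;> linarith

/-- for a graphical strip `S_α` over `K`, the condition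
`α(w₂) − α(w₁) ≥ −(w₂ − w₁)` is equivalent to the existence of `σ` with
`−2(z₂−z₁) ≤ σ(z₂) − σ(z₁) < 2(z₂−z₁)` such that
`S_α = ⋃_z [(−1, −σ(z), z), (1, σ(z), z)]`. -/
theorem strip_alternate (α : ℝ → ℝ) (hα : Continuous α)
    (hstrip : ∃ f : H → ℝ, ContinuousOn f K ∧ IGraph K f = Salpha α) :
    (∀ w₁ w₂ : ℝ, w₁ < w₂ → α w₂ - α w₁ ≥ -(w₂ - w₁)) ↔
      (∃ σ : ℝ → ℝ,
        (∀ z₁ z₂ : ℝ, z₁ < z₂ →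
          -2 * (z₂ - z₁) ≤ σ z₂ - σ z₁ ∧ σ z₂ - σ z₁ < 2 * (z₂ - z₁)) ∧
        Salpha α = ⋃ z : ℝ, segment ℝ ((-1, -σ z, z) : H) ((1, σ z, z) : H)) := by

  constructor
  · intro hi
    set η : ℝ → ℝ := fun w => w + α w / 2 with hηdef
    have hmono : StrictMono η := by
      intro w₁ w₂ h
      have := hi w₁ w₂ h
      simp only [hηdef]
      linarith
    have hcont : Continuous η := by fun_prop
    have haux_top : Tendsto (fun w : ℝ => (w + α 0) / 2) atTop atTop := by
      apply Tendsto.atTop_div_const (by norm_num)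
      exact tendsto_atTop_add_const_right _ _ tendsto_id
    have haux_bot : Tendsto (fun w : ℝ => (w + α 0) / 2) atBot atBot := by
      apply Tendsto.atBot_div_const (by norm_num)
      exact tendsto_atBot_add_const_right _ _ tendsto_id
    have htop : Tendsto η atTop atTop := by
      refine tendsto_atTop_mono' atTop ?_ haux_top
      filter_upwards [eventually_gt_atTop 0] with w hw
      have := hi 0 w hw
      simp only [hηdef]
      linarith
    have hbot : Tendsto η atBot atBot := by
      refine tendsto_atBot_mono' atBot ?_ haux_bot
      filter_upwards [eventually_lt_atBot 0] with w hw
      have := hi w 0 hw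
      simp only [hηdef]
      linarith
    have hsurj : Function.Surjective η := Continuous.surjective hcont htop hbot
    set inv : ℝ → ℝ := Function.invFun η with hinvdef
    have hR : ∀ z, η (inv z) = z := fun z => Function.invFun_eq (hsurj z)
    have hL : ∀ w, inv (η w) = w :=
      Function.leftInverse_invFun hmono.injective
    refine ⟨fun z => α (inv z), ?_, ?_⟩
    · intro z₁ z₂ hz
      have hw : inv z₁ < inv z₂ := by
        by_contra hcon
        push_neg at hcon
        have := hmono.monotone hcon
        rw [hR, hR] at this
        linarith
      have hi' := hi _ _ hw
      have e1 : z₁ = inv z₁ + α (inv z₁) / 2 := (hR z₁).symm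
      have e2 : z₂ = inv z₂ + α (inv z₂) / 2 := (hR z₂).symm
      constructor
      · show -2 * (z₂ - z₁) ≤ α (inv z₂) - α (inv z₁)
        linarith
      · show α (inv z₂) - α (inv z₁) < 2 * (z₂ - z₁)
        linarith
    · ext p
      simp only [Salpha, Set.mem_iUnion]
      constructor
      · rintro ⟨w, hw⟩
        refine ⟨η w, ?_⟩
        rw [hL w]
        exact hw
      · rintro ⟨z, hz⟩
        refine ⟨inv z, ?_⟩
        have e : inv z + α (inv z) / 2 = z := hR z
        rw [e]
        exact hz
  · rintro ⟨σ, hσ, hset⟩ w₁ w₂ hlt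
    have key : ∀ w : ℝ, σ (w + α w / 2) = α w := by
      intro w
      have hmem : ((1 : ℝ), α w, w + α w / 2) ∈ Salpha α :=
        Set.mem_iUnion.2 ⟨w, right_mem_segment ℝ _ _⟩
      rw [hset] at hmem
      obtain ⟨z, hz⟩ := Set.mem_iUnion.1 hmem
      obtain ⟨h1, h2⟩ := seg_end hz
      rw [h2, h1]
    set z₁ := w₁ + α w₁ / 2
    set z₂ := w₂ + α w₂ / 2
    have k1 : σ z₁ = α w₁ := key w₁
    have k2 : σ z₂ = α w₂ := key w₂
    rcases lt_trichotomy z₁ z₂ with h | h | h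
    · have := (hσ z₁ z₂ h).1
      rw [k1, k2] at this
      simp only [z₁, z₂] at this
      linarith
    · have : α w₁ = α w₂ := by rw [← k1, ← k2, h]
      simp only [z₁, z₂] at h
      linarith
    · have := (hσ z₂ z₁ h).2
      rw [k1, k2] at this
      simp only [z₁, z₂] at this
      linarith
end
end

section
/- Let α, τ : ℝ → ℝ be continuous with α(w₂) − α(w₁) ≥ −2(w₂ − w₁) for all w₁ < w₂, with η(w) = w + α(w)/2 surjective, and with |τ(a) − τ(b)| ≤ L·|a − b| for all a, b and some constant L < 2. Let h : ℝ → ℝ be a function satisfying h(w) − τ(h(w))/2 = η(w) for all w ∈ ℝ. Define Σ_{τ,α} = ⋃_{w∈ℝ} [(0, τ(h(w)), h(w)), (1, α(w), η(w))], where [p,q] is the Euclidean line segment in ℝ³ (each such segment is a horizontal segment). Then the intrinsic projection Π is injective on Σ_{τ,α}; that is, Σ_{τ,α} is an intrinsic graph. -/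
open MeasureTheory Filter

noncomputable section

/-- the ruled surface `Σ_{τ,α} = ⋃_w [(0, τ(h(w)), h(w)), (1, α(w), η(w))]`
is an intrinsic graph, i.e. `Π` is injective on it. -/
theorem sigma_tau_alpha_intrinsic_graph
    (α τ : ℝ → ℝ) (hα : Continuous α) (hτ : Continuous τ)
    (hmono : ∀ w₁ w₂ : ℝ, w₁ < w₂ → α w₂ - α w₁ ≥ -2 * (w₂ - w₁))
    (hsurj : Function.Surjective (fun w : ℝ => w + α w / 2))
    (L : ℝ) (hL : L < 2) (hLip : ∀ a b : ℝ, |τ a - τ b| ≤ L * |a - b|)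
    (h : ℝ → ℝ) (hh : ∀ w : ℝ, h w - τ (h w) / 2 = w + α w / 2) :
    Set.InjOn Proj
      (⋃ w : ℝ, segment ℝ ((0, τ (h w), h w) : H) ((1, α w, w + α w / 2) : H)) := by
  -- h is nondecreasing
  have hhmono : ∀ w₁ w₂ : ℝ, w₁ ≤ w₂ → h w₁ ≤ h w₂ := by
    intro w₁ w₂ hw
    by_contra hc
    push_neg at hc
    have h1 := hh w₁
    have h2 := hh w₂
    have h3 : w₁ + α w₁ / 2 ≤ w₂ + α w₂ / 2 := by
      rcases eq_or_lt_of_le hw with rfl | hlt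
      · exact le_rfl
      · have := hmono w₁ w₂ hlt; linarith
    have h4 := hLip (h w₁) (h w₂)
    rw [abs_of_pos (by linarith : (0:ℝ) < h w₁ - h w₂)] at h4
    have h5 := le_abs_self (τ (h w₁) - τ (h w₂))
    nlinarith
  -- key strict monotonicity of the projected third coordinate along slices t = const
  have key : ∀ w₁ w₂ t : ℝ, w₁ < w₂ → 0 < t → t ≤ 1 →
      (1 - t) * h w₁ + t * (w₁ + α w₁ / 2)
        - t * ((1 - t) * τ (h w₁) + t * α w₁) / 2
      < (1 - t) * h w₂ + t * (w₂ + α w₂ / 2)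
        - t * ((1 - t) * τ (h w₂) + t * α w₂) / 2 := by
    intro w₁ w₂ t hw ht0 ht1
    have h1 := hh w₁
    have h2 := hh w₂
    have hΔh : h w₁ ≤ h w₂ := hhmono w₁ w₂ hw.le
    have h4 := hLip (h w₂) (h w₁)
    rw [abs_of_nonneg (by linarith : (0:ℝ) ≤ h w₂ - h w₁)] at h4
    have hτu : τ (h w₂) - τ (h w₁) ≤ L * (h w₂ - h w₁) :=
      le_trans (le_abs_self _) h4
    have hτl : -(L * (h w₂ - h w₁)) ≤ τ (h w₂) - τ (h w₁) := by
      have := neg_abs_le (τ (h w₂) - τ (h w₁)); linarith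
    have hA : 0 ≤ (1 - t) * (h w₂ - h w₁) * (1 + t - t * L) := by
      have : (0:ℝ) ≤ 1 + t - t * L := by nlinarith
      have h1t : (0:ℝ) ≤ 1 - t := by linarith
      exact mul_nonneg (mul_nonneg h1t (by linarith)) this
    have hB : 0 ≤ t * (1 - t) * (L * (h w₂ - h w₁) - (τ (h w₂) - τ (h w₁))) := by
      have h1t : (0:ℝ) ≤ 1 - t := by linarith
      have : 0 ≤ L * (h w₂ - h w₁) - (τ (h w₂) - τ (h w₁)) := by linarith
      exact mul_nonneg (mul_nonneg ht0.le h1t) this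
    nlinarith [mul_pos (mul_pos ht0 ht0) (sub_pos.mpr hw)]
  intro p hp q hq hpq
  rw [Set.mem_iUnion] at hp hq
  obtain ⟨w₁, hp⟩ := hp
  obtain ⟨w₂, hq⟩ := hq
  rw [segment_eq_image] at hp hq
  obtain ⟨t, ⟨ht0, ht1⟩, rfl⟩ := hp
  obtain ⟨s, ⟨hs0, hs1⟩, rfl⟩ := hq
  simp only [Proj, Prod.smul_mk, Prod.mk_add_mk, smul_eq_mul, Prod.mk.injEq] at hpq ⊢
  obtain ⟨e1, -, e3⟩ := hpq
  have hts : t = s := by simpa using e1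
  subst hts
  have e3' : (1 - t) * h w₁ + t * (w₁ + α w₁ / 2)
        - t * ((1 - t) * τ (h w₁) + t * α w₁) / 2
      = (1 - t) * h w₂ + t * (w₂ + α w₂ / 2)
        - t * ((1 - t) * τ (h w₂) + t * α w₂) / 2 := by
    have : (1 - t) * 0 + t * 1 = t := by ring
    nlinarith [e3]
  rcases eq_or_lt_of_le ht0 with rfl | htpos
  · -- t = 0 : point determined by h w
    have hhw : h w₁ = h w₂ := by
      simpa using e3'
    refine ⟨by ring, by rw [hhw]; ring, by rw [hhw]; ring⟩
  · have hw : w₁ = w₂ := by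
      rcases lt_trichotomy w₁ w₂ with hlt | heq | hgt
      · exact absurd e3' (ne_of_lt (key w₁ w₂ t hlt htpos ht1))
      · exact heq
      · exact absurd e3'.symm (ne_of_lt (key w₂ w₁ t hgt htpos ht1))
    subst hw
    exact ⟨rfl, rfl, rfl⟩
end
end

section
/- Let ε > 0 and let f : {(x,0,z) : |x| ≤ 1+ε, z ∈ ℝ} → ℝ be continuous such that Γ_f is a union of horizontal segments, each having one endpoint with x-coordinate −(1+ε) and the other endpoint with x-coordinate 1+ε, and each intersecting the z-axis {(0,0,z) : z ∈ ℝ}. Define α̂ : ℝ → ℝ by α̂(w) = f(1,0,w). Then for all s < t: −2(t − s) ≤ α̂(t) − α̂(s) ≤ (ε + ε²/2)^{−1}·(t − s). In particular α̂ is Lipschitz. -/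
open MeasureTheory Filter

noncomputable section

lemma key_line (ε : ℝ) (hε : 0 < ε) (f : H → ℝ)
    (D : Set H) (hD : D = {p : H | p.2.1 = 0 ∧ |p.1| ≤ 1 + ε})
    (hruled : ∀ p ∈ IGraph D f, ∃ q r : H,
        q.1 = -(1 + ε) ∧ r.1 = 1 + ε ∧
        (Hmul (Hinv q) r).2.2 = 0 ∧
        segment ℝ q r ⊆ IGraph D f ∧
        p ∈ segment ℝ q r ∧
        ∃ s ∈ segment ℝ q r, s.1 = 0 ∧ s.2.1 = 0)
    (w : ℝ) (x : ℝ) (hx : |x| ≤ 1 + ε) :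
    f (x, 0, w + f (1, 0, w) / 2 - f (1, 0, w) * x ^ 2 / 2) = f (1, 0, w) * x := by
  have h1 : (0:ℝ) < 1 + ε := by linarith
  have h2 : (0:ℝ) < 2 * (1 + ε) := by linarith
  set a := f (1, 0, w) with ha
  have hpmem : ((1 : ℝ), a, w + 1 * a / 2) ∈ IGraph D f := by
    refine ⟨1, w, ?_, rfl⟩
    rw [hD]
    exact ⟨rfl, by rw [abs_one]; linarith⟩
  obtain ⟨q, r, hq1, hr1, hhor, hsub, hp, s0, hs0seg, hs0x, hs0y⟩ := hruled _ hpmem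
  rw [segment_eq_image'] at hp hs0seg
  obtain ⟨θp, hθp, hpe⟩ := hp
  obtain ⟨θ0, hθ0, hs0e⟩ := hs0seg
  have E1 : q.1 + θp * (r.1 - q.1) = 1 := by
    have := congrArg Prod.fst hpe; simpa [Prod.smul_def] using this
  have E2 : q.2.1 + θp * (r.2.1 - q.2.1) = a := by
    have := congrArg (fun p : H => p.2.1) hpe; simpa [Prod.smul_def] using this
  have E3 : q.2.2 + θp * (r.2.2 - q.2.2) = w + 1 * a / 2 := by
    have := congrArg (fun p : H => p.2.2) hpe; simpa [Prod.smul_def] using this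
  have E4 : q.1 + θ0 * (r.1 - q.1) = 0 := by
    have := congrArg Prod.fst hs0e; simpa [Prod.smul_def, hs0x] using this
  have E5 : q.2.1 + θ0 * (r.2.1 - q.2.1) = 0 := by
    have := congrArg (fun p : H => p.2.1) hs0e; simpa [Prod.smul_def, hs0y] using this
  have hhor' : -q.2.2 + r.2.2 + (-q.1 * r.2.1 - -q.2.1 * r.1) / 2 = 0 := hhor
  have hdz : r.2.2 - q.2.2 = 0 := by
    linear_combination hhor' + (r.2.1 - q.2.1) / 2 * E4 - (r.1 - q.1) / 2 * E5
  set θ : ℝ := θ0 + x * (θp - θ0) with hθ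
  have hdx : r.1 - q.1 = 2 * (1 + ε) := by rw [hq1, hr1]; ring
  have hθpθ0 : (θp - θ0) * (2 * (1 + ε)) = 1 := by
    have h' : (θp - θ0) * (r.1 - q.1) = 1 := by linear_combination E1 - E4
    rwa [hdx] at h'
  have hθ0v : θ0 = 1 / 2 := by
    have h3 : (θ0 - 1 / 2) * (2 * (1 + ε)) = 0 := by
      have := E4; rw [hq1, hr1] at this; linear_combination this
    rcases mul_eq_zero.mp h3 with h4 | h4
    · linarith
    · linarith
  have hθe : θ * (2 * (1 + ε)) = (1 + ε) + x := by
    rw [hθ]; linear_combination x * hθpθ0 + (2 * (1 + ε)) * hθ0v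
  have hxl := abs_le.mp hx
  have hθmem : θ ∈ Set.Icc (0:ℝ) 1 := by
    constructor
    · by_contra h; push_neg at h
      nlinarith [mul_pos h2 (neg_pos.mpr h)]
    · by_contra h; push_neg at h
      nlinarith [mul_pos h2 (sub_pos.mpr h)]
  have hPseg : (q + θ • (r - q)) ∈ segment ℝ q r := by
    rw [segment_eq_image']; exact ⟨θ, hθmem, rfl⟩
  have c1 : q.1 + θ * (r.1 - q.1) = x := by
    rw [hθ]; linear_combination E4 + x * (E1 - E4)
  have c2 : q.2.1 + θ * (r.2.1 - q.2.1) = a * x := by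
    rw [hθ]; linear_combination E5 + x * (E2 - E5)
  have c3 : q.2.2 + θ * (r.2.2 - q.2.2) = w + 1 * a / 2 := by
    linear_combination E3 + (θ - θp) * hdz
  have hPco : q + θ • (r - q) = ((x : ℝ), a * x, w + 1 * a / 2) :=
    Prod.ext c1 (Prod.ext c2 c3)
  rw [hPco] at hPseg
  obtain ⟨x', z', hmem', he'⟩ := hsub hPseg
  obtain rfl : x = x' := congrArg Prod.fst he'
  have hy' : a * x = f (x, 0, z') := congrArg (fun p : H => p.2.1) he'
  have hz' : w + 1 * a / 2 = z' + x * f (x, 0, z') / 2 :=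
    congrArg (fun p : H => p.2.2) he'
  have hz'' : z' = w + a / 2 - a * x ^ 2 / 2 := by
    rw [← hy'] at hz'; linear_combination -hz'
  rw [← hz'']
  exact hy'.symm



/-- if `Γ_f` is a union of horizontal segments over the strip
`{|x| ≤ 1+ε}`, each going from `x = −(1+ε)` to `x = 1+ε` and meeting the
`z`-axis, then `α̂(w) = f(1,0,w)` satisfies
`−2(t − s) ≤ α̂(t) − α̂(s) ≤ (ε + ε²/2)⁻¹ (t − s)` for all `s < t`. -/
theorem strip_boundary_lipschitz
    (ε : ℝ) (hε : 0 < ε) (f : H → ℝ)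
    (D : Set H) (hD : D = {p : H | p.2.1 = 0 ∧ |p.1| ≤ 1 + ε})
    (hf : ContinuousOn f D)
    (hruled : ∀ p ∈ IGraph D f, ∃ q r : H,
        q.1 = -(1 + ε) ∧ r.1 = 1 + ε ∧
        (Hmul (Hinv q) r).2.2 = 0 ∧
        segment ℝ q r ⊆ IGraph D f ∧
        p ∈ segment ℝ q r ∧
        ∃ s ∈ segment ℝ q r, s.1 = 0 ∧ s.2.1 = 0) :
    ∀ s t : ℝ, s < t →
      -2 * (t - s) ≤ f (1, 0, t) - f (1, 0, s) ∧
        f (1, 0, t) - f (1, 0, s) ≤ (ε + ε ^ 2 / 2)⁻¹ * (t - s) := by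
  intro s t hst
  set A := f (1, 0, s) with hA
  set B := f (1, 0, t) with hB
  have h1 : (0:ℝ) < 1 + ε := by linarith
  have Fs := key_line ε hε f D hD hruled s
  have Ft := key_line ε hε f D hD hruled t
  rw [← hA] at Fs
  rw [← hB] at Ft
  -- no-crossing: if the base points agree at some x ∈ (0, 1+ε], then A = B, hence s = t.
  have nocross : ∀ x : ℝ, 0 < x → x ≤ 1 + ε →
      s + A / 2 - A * x ^ 2 / 2 = t + B / 2 - B * x ^ 2 / 2 → False := by
    intro x hx0 hx1 harg
    have hxabs : |x| ≤ 1 + ε := by rw [abs_of_pos hx0]; exact hx1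
    have e1 := Fs x hxabs
    have e2 := Ft x hxabs
    rw [harg, e2] at e1
    have hABeq : A = B := (mul_right_cancel₀ (ne_of_gt hx0) e1).symm
    -- then harg forces s = t
    rw [hABeq] at harg
    have : s = t := by linarith
    exact absurd this (ne_of_lt hst)
  constructor
  · -- lower bound
    by_contra hcon
    push_neg at hcon
    have hd : B - A < 0 := by linarith
    have hba : B - A ≠ 0 := ne_of_lt hd
    set u : ℝ := 1 + 2 * (t - s) / (B - A) with hu
    have hq1 : -1 < 2 * (t - s) / (B - A) := by
      rw [lt_div_iff_of_neg hd]; nlinarith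
    have hq2 : 2 * (t - s) / (B - A) < 0 :=
      div_neg_of_pos_of_neg (by linarith) hd
    have hu0 : 0 < u := by rw [hu]; linarith
    have hu1 : u ≤ 1 := by rw [hu]; linarith
    set x : ℝ := Real.sqrt u with hxdef
    have hx0 : 0 < x := Real.sqrt_pos.mpr hu0
    have hx1 : x ≤ 1 + ε := by
      have := Real.sqrt_le_sqrt hu1
      rw [Real.sqrt_one] at this
      linarith
    have hxsq : x ^ 2 = u := Real.sq_sqrt hu0.le
    have hbu : (B - A) * u = (B - A) + 2 * (t - s) := by
      rw [hu]; field_simp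
    refine nocross x hx0 hx1 ?_
    rw [hxsq, hu]
    field_simp
    ring
  · -- upper bound
    by_contra hcon
    push_neg at hcon
    have c0 : (0:ℝ) < ε + ε ^ 2 / 2 := by positivity
    have hd : 0 < B - A := by
      have : 0 < (ε + ε ^ 2 / 2)⁻¹ * (t - s) :=
        mul_pos (inv_pos.mpr c0) (by linarith)
      linarith
    have hba : B - A ≠ 0 := ne_of_gt hd
    have hts : t - s < (ε + ε ^ 2 / 2) * (B - A) := by
      have h := mul_lt_mul_of_pos_left hcon c0
      rwa [← mul_assoc, mul_inv_cancel₀ (ne_of_gt c0), one_mul] at h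
    set u : ℝ := 1 + 2 * (t - s) / (B - A) with hu
    have hq1 : 0 < 2 * (t - s) / (B - A) := div_pos (by linarith) hd
    have hq2 : 2 * (t - s) / (B - A) < 2 * ε + ε ^ 2 := by
      rw [div_lt_iff₀ hd]; nlinarith
    have hu0 : 0 < u := by rw [hu]; linarith
    have husq : u ≤ (1 + ε) ^ 2 := by rw [hu]; nlinarith
    set x : ℝ := Real.sqrt u with hxdef
    have hx0 : 0 < x := Real.sqrt_pos.mpr hu0
    have hx1 : x ≤ 1 + ε := by
      have h := Real.sqrt_le_sqrt husq
      rwa [Real.sqrt_sq h1.le] at h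
    have hxsq : x ^ 2 = u := Real.sq_sqrt hu0.le
    have hbu : (B - A) * u = (B - A) + 2 * (t - s) := by
      rw [hu]; field_simp
    refine nocross x hx0 hx1 ?_
    rw [hxsq, hu]
    field_simp
    ring
end
end

section
/- Let σ : ℝ → ℝ be a function such that |σ(z₂) − σ(z₁)| ≤ 2·(z₂ − z₁) for all z₁ < z₂. Let x₁, x₂ ∈ (−1, 1) and z₁ ≠ z₂, and set p = (x₁, x₁·σ(z₁), z₁) and q = (x₂, x₂·σ(z₂), z₂). Then the z-coordinate of p⁻¹·q is nonzero, i.e., z₂ − z₁ ≠ x₁·x₂·(σ(z₂) − σ(z₁))/2. In particular, p and q do not lie on a common horizontal line. -/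
open MeasureTheory Filter

noncomputable section

/-- if `|σ(z₂) − σ(z₁)| ≤ 2(z₂ − z₁)` for all `z₁ < z₂`,
`x₁, x₂ ∈ (−1,1)` and `z₁ ≠ z₂`, then the `z`-coordinate of `p⁻¹q` is nonzero,
where `p = (x₁, x₁σ(z₁), z₁)` and `q = (x₂, x₂σ(z₂), z₂)`; equivalently
`z₂ − z₁ ≠ x₁x₂(σ(z₂) − σ(z₁))/2`.  In particular `p` and `q` do not lie on a
common horizontal line. -/
theorem no_common_horizontal_line
    (σ : ℝ → ℝ)
    (hσ : ∀ z₁ z₂ : ℝ, z₁ < z₂ → |σ z₂ - σ z₁| ≤ 2 * (z₂ - z₁))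
    (x₁ x₂ : ℝ) (hx₁ : x₁ ∈ Set.Ioo (-1 : ℝ) 1) (hx₂ : x₂ ∈ Set.Ioo (-1 : ℝ) 1)
    (z₁ z₂ : ℝ) (hz : z₁ ≠ z₂) :
    (Hmul (Hinv (x₁, x₁ * σ z₁, z₁)) (x₂, x₂ * σ z₂, z₂)).2.2 ≠ 0 ∧
      z₂ - z₁ ≠ x₁ * x₂ * (σ z₂ - σ z₁) / 2 := by
  have hσabs : |σ z₂ - σ z₁| ≤ 2 * |z₂ - z₁| := by
    rcases lt_or_gt_of_ne hz with h | h
    · simpa [abs_of_pos (sub_pos.mpr h)] using hσ z₁ z₂ h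
    · have := hσ z₂ z₁ h
      rw [abs_sub_comm (z₂) z₁, abs_of_pos (sub_pos.mpr h)]
      simpa [abs_sub_comm] using this
  have hx₁' : |x₁| < 1 := abs_lt.mpr ⟨hx₁.1, hx₁.2⟩
  have hx₂' : |x₂| < 1 := abs_lt.mpr ⟨hx₂.1, hx₂.2⟩
  have hzz : (0:ℝ) < |z₂ - z₁| := abs_pos.mpr (sub_ne_zero.mpr (Ne.symm hz))
  have key : z₂ - z₁ ≠ x₁ * x₂ * (σ z₂ - σ z₁) / 2 := by
    intro hEq
    have h1 : |x₁ * x₂ * (σ z₂ - σ z₁) / 2| < |z₂ - z₁| := by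
      rw [abs_div, abs_mul, abs_mul]
      have hx : |x₁| * |x₂| < 1 := by
        calc |x₁| * |x₂| ≤ |x₁| * 1 := by
              exact mul_le_mul_of_nonneg_left hx₂'.le (abs_nonneg _)
          _ = |x₁| := mul_one _
          _ < 1 := hx₁'
      have h2 : |x₁| * |x₂| * |σ z₂ - σ z₁| ≤ |x₁| * |x₂| * (2 * |z₂ - z₁|) :=
        mul_le_mul_of_nonneg_left hσabs (by positivity)
      have h3 : |x₁| * |x₂| * (2 * |z₂ - z₁|) < 1 * (2 * |z₂ - z₁|) := by
        apply mul_lt_mul_of_pos_right hx; positivity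
      calc |x₁| * |x₂| * |σ z₂ - σ z₁| / |(2:ℝ)|
          = |x₁| * |x₂| * |σ z₂ - σ z₁| / 2 := by norm_num
        _ < 1 * (2 * |z₂ - z₁|) / 2 := by
            have : |x₁| * |x₂| * |σ z₂ - σ z₁| < 1 * (2 * |z₂ - z₁|) := lt_of_le_of_lt h2 h3
            linarith
        _ = |z₂ - z₁| := by ring
    rw [← hEq] at h1
    exact lt_irrefl _ h1
  refine ⟨?_, key⟩
  simp only [Hmul, Hinv]
  intro h
  apply key
  nlinarith [h]
end
end

section
/- Let f : V₀ → ℝ. For i = 1, 2 let Lᵢ be the horizontal line through (0, cᵢ, dᵢ) with direction (1, mᵢ, 0), and suppose Lᵢ ⊆ Γ_f and L₁ ≠ L₂. Let gᵢ(x) = dᵢ − cᵢ·x − (mᵢ/2)·x², so that Π(Lᵢ) = {(x, 0, gᵢ(x)) : x ∈ ℝ}. If d₁ < d₂, then g₁(x) ≤ g₂(x) for all x ∈ ℝ and m₁ ≥ m₂. -/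
open MeasureTheory Filter

noncomputable section

/-- The horizontal line through `p` with slope `m` (direction `(1, m, 0)`). -/
def horizLine (p : H) (m : ℝ) : Set H := {q : H | ∃ t : ℝ, q = Hmul p (t, t * m, 0)}

/-- The horizontal line through `p` with direction `(a, b, 0)`. -/
def horizLineGen (p : H) (a b : ℝ) : Set H := {q : H | ∃ t : ℝ, q = Hmul p (t * a, t * b, 0)}

/-- `Γ_f` is ruled: every point of `Γ_f` lies on a horizontal line contained in `Γ_f`. -/
def IsRuled (S : Set H) : Prop :=
  ∀ p ∈ S, ∃ q : H, ∃ a b : ℝ, (a, b) ≠ ((0 : ℝ), (0 : ℝ)) ∧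
    p ∈ horizLineGen q a b ∧ horizLineGen q a b ⊆ S

lemma line_in_graph_val (f : H → ℝ) (c d m : ℝ)
    (h : horizLine ((0 : ℝ), c, d) m ⊆ IGraph V0 f) (x : ℝ) :
    f (x, 0, d - c * x - m / 2 * x ^ 2) = c + x * m := by
  have hx : Hmul ((0 : ℝ), c, d) (x, x * m, 0) ∈ IGraph V0 f := h ⟨x, rfl⟩
  obtain ⟨x', z', -, heq⟩ := hx
  simp only [Hmul, Prod.mk.injEq] at heq
  obtain ⟨h1, h2, h3⟩ := heq
  have hx' : x' = x := by linarith
  rw [hx'] at h2 h3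
  have hz' : z' = d - c * x - m / 2 * x ^ 2 := by
    rw [← h2] at h3; nlinarith [h3]
  rw [hz'] at h2
  linarith [h2]

/-- monotonicity of rulings.  If `Lᵢ` is the horizontal line through
`(0, cᵢ, dᵢ)` with slope `mᵢ`, both contained in `Γ_f`, `L₁ ≠ L₂` and `d₁ < d₂`,
then `g₁ ≤ g₂` everywhere (where `gᵢ(x) = dᵢ − cᵢ x − (mᵢ/2) x²`) and `m₁ ≥ m₂`. -/
theorem monotone_slopes
    (f : H → ℝ) (c₁ c₂ d₁ d₂ m₁ m₂ : ℝ)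
    (h₁ : horizLine ((0 : ℝ), c₁, d₁) m₁ ⊆ IGraph V0 f)
    (h₂ : horizLine ((0 : ℝ), c₂, d₂) m₂ ⊆ IGraph V0 f)
    (hne : horizLine ((0 : ℝ), c₁, d₁) m₁ ≠ horizLine ((0 : ℝ), c₂, d₂) m₂)
    (hd : d₁ < d₂) :
    (∀ x : ℝ, d₁ - c₁ * x - m₁ / 2 * x ^ 2 ≤ d₂ - c₂ * x - m₂ / 2 * x ^ 2) ∧
      m₂ ≤ m₁ := by
  -- difference function
  set g : ℝ → ℝ := fun x => (d₂ - c₂ * x - m₂ / 2 * x ^ 2) - (d₁ - c₁ * x - m₁ / 2 * x ^ 2)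
    with hg
  have hgcont : Continuous g := by fun_prop
  have hg0 : g 0 = d₂ - d₁ := by simp [hg]
  -- at a common root, f-values agree, so the root is a double root
  have key : ∀ x : ℝ, g x = 0 → c₁ + x * m₁ = c₂ + x * m₂ := by
    intro x hx
    have e1 := line_in_graph_val f c₁ d₁ m₁ h₁ x
    have e2 := line_in_graph_val f c₂ d₂ m₂ h₂ x
    have harg : d₁ - c₁ * x - m₁ / 2 * x ^ 2 = d₂ - c₂ * x - m₂ / 2 * x ^ 2 := by
      simp only [hg] at hx; linarith
    rw [harg, e2] at e1
    exact e1.symm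
  -- Part 1: g ≥ 0 everywhere
  have part1 : ∀ x : ℝ, 0 ≤ g x := by
    intro x0
    by_contra hneg
    push_neg at hneg
    -- find a root between 0 and x0
    have hmem : (0 : ℝ) ∈ Set.uIcc (g 0) (g x0) :=
      Set.mem_uIcc.mpr (Or.inr ⟨le_of_lt hneg, by rw [hg0]; linarith⟩)
    obtain ⟨xs, -, hxs⟩ := intermediate_value_uIcc (hgcont.continuousOn) hmem
    have hroot : g xs = 0 := hxs
    have hder := key xs hroot
    have hroot' : (d₂ - c₂ * xs - m₂ / 2 * xs ^ 2) - (d₁ - c₁ * xs - m₁ / 2 * xs ^ 2) = 0 := by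
      simpa [hg] using hroot
    -- d₂ - d₁ = (m₁ - m₂)/2 * xs²
    have hs2 : (m₁ - m₂) / 2 * xs ^ 2 = d₂ - d₁ := by linear_combination -hroot' + xs * hder
    have hs0 : 0 < m₁ - m₂ := by nlinarith [sq_nonneg xs]
    have hform : (d₂ - c₂ * x0 - m₂ / 2 * x0 ^ 2) - (d₁ - c₁ * x0 - m₁ / 2 * x0 ^ 2)
        = (m₁ - m₂) / 2 * (x0 - xs) ^ 2 := by
      linear_combination -hs2 + x0 * hder
    have hneg' : (d₂ - c₂ * x0 - m₂ / 2 * x0 ^ 2) - (d₁ - c₁ * x0 - m₁ / 2 * x0 ^ 2) < 0 := by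
      simpa [hg] using hneg
    nlinarith [sq_nonneg (x0 - xs)]
  refine ⟨fun x => by have := part1 x; simp only [hg] at this; linarith, ?_⟩
  -- Part 2: m₂ ≤ m₁
  by_contra hm
  push_neg at hm
  set s : ℝ := m₂ - m₁ with hs
  have hspos : 0 < s := by simp [hs]; linarith
  set x : ℝ := (2 * (d₂ - d₁) + s) / s with hx
  have hsx : s * x = 2 * (d₂ - d₁) + s := by
    rw [hx]; field_simp
  have p1 := part1 x
  have p2 := part1 (-x)
  simp only [hg] at p1 p2
  -- g x + g (-x) = 2(d₂ - d₁) - s x² ≥ 0, but s x = 2(d₂-d₁)+s, x ≥ 1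
  have hx1 : 1 ≤ x := by
    rw [hx]
    rw [le_div_iff₀ hspos]
    linarith
  nlinarith [mul_le_mul_of_nonneg_left hx1 (le_of_lt hspos)]
end
end

section
/- Let f : V₀ → ℝ be continuous and suppose Γ_f is ruled, in the sense that every point of Γ_f lies on a horizontal line contained in Γ_f. Suppose L₁, L₂ ⊆ Γ_f are horizontal lines, with directions (1, m₁, 0) and (1, m₂, 0) respectively where m₁ < m₂, that both pass through a common point p ∈ Γ_f. Then for every m ∈ [m₁, m₂], the horizontal line p·{t·(1, m, 0) : t ∈ ℝ} is contained in Γ_f. -/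
open MeasureTheory Filter

noncomputable section

lemma mem_graph_iff (f : H → ℝ) (q : H) :
    q ∈ IGraph V0 f ↔ q.2.1 = f (q.1, 0, q.2.2 - q.1 * q.2.1 / 2) := by
  constructor
  · rintro ⟨x, z, -, rfl⟩
    have h3 : z + x * f (x, 0, z) / 2 - x * f (x, 0, z) / 2 = z := by ring
    simp only [h3]
  · intro h
    refine ⟨q.1, q.2.2 - q.1 * q.2.1 / 2, by simp [V0], ?_⟩
    rw [← h]
    have : q.2.2 - q.1 * q.2.1 / 2 + q.1 * q.2.1 / 2 = q.2.2 := by ring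
    rw [this]

lemma line_para {f : H → ℝ} {p0 : H} {m : ℝ} (h : horizLine p0 m ⊆ IGraph V0 f) (x : ℝ) :
    f (x, 0, (p0.2.2 + p0.1 * p0.2.1 / 2 - m * p0.1 ^ 2 / 2) - (p0.2.1 - m * p0.1) * x - m * x ^ 2 / 2)
      = (p0.2.1 - m * p0.1) + m * x := by
  have hx := h ⟨x - p0.1, rfl⟩
  rw [mem_graph_iff] at hx
  simp only [Hmul] at hx
  have harg : ((x : ℝ), (0 : ℝ),
      (p0.2.2 + p0.1 * p0.2.1 / 2 - m * p0.1 ^ 2 / 2) - (p0.2.1 - m * p0.1) * x - m * x ^ 2 / 2)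
      = (p0.1 + (x - p0.1), (0 : ℝ),
        p0.2.2 + 0 + (p0.1 * ((x - p0.1) * m) - p0.2.1 * (x - p0.1)) / 2 -
          (p0.1 + (x - p0.1)) * (p0.2.1 + (x - p0.1) * m) / 2) := by
    simp only [Prod.mk.injEq]
    exact ⟨by ring, trivial, by ring⟩
  rw [harg, ← hx]
  ring

lemma gen_eq_line {q0 : H} {a b : ℝ} (ha : a ≠ 0) :
    horizLineGen q0 a b = horizLine q0 (b / a) := by
  ext q
  constructor
  · rintro ⟨t, rfl⟩
    refine ⟨t * a, ?_⟩
    have : t * a * (b / a) = t * b := by field_simp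
    rw [this]
  · rintro ⟨t, rfl⟩
    refine ⟨t / a, ?_⟩
    have h1 : t / a * a = t := by field_simp
    have h2 : t / a * b = t * (b / a) := by field_simp
    rw [h1, h2]

lemma ruling_a_ne {f : H → ℝ} {q0 : H} {a b : ℝ} (hab : (a, b) ≠ ((0 : ℝ), (0 : ℝ)))
    (hsub : horizLineGen q0 a b ⊆ IGraph V0 f) : a ≠ 0 := by
  intro ha
  subst ha
  have hb : b ≠ 0 := by
    intro hb; exact hab (by rw [hb])
  have key : ∀ t : ℝ, q0.2.1 + t * b = f (q0.1, 0, q0.2.2 - q0.1 * q0.2.1 / 2) := by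
    intro t
    have hx := hsub ⟨t, rfl⟩
    rw [mem_graph_iff] at hx
    have harg : (((Hmul q0 (t * 0, t * b, 0)).1, (0 : ℝ),
        (Hmul q0 (t * 0, t * b, 0)).2.2 -
          (Hmul q0 (t * 0, t * b, 0)).1 * (Hmul q0 (t * 0, t * b, 0)).2.1 / 2) : H)
        = (q0.1, 0, q0.2.2 - q0.1 * q0.2.1 / 2) := by
      simp only [Hmul, Prod.mk.injEq]
      exact ⟨by ring, trivial, by ring⟩
    rw [harg] at hx
    have hy : (Hmul q0 (t * 0, t * b, 0)).2.1 = q0.2.1 + t * b := by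
      simp [Hmul]
    rw [hy] at hx
    exact hx
  have h0 := key 0
  have h1 := key (1 / b)
  rw [one_div, inv_mul_cancel₀ hb] at h1
  linarith

lemma quad_key {α β γ u v : ℝ}
    (htan : ∀ x : ℝ, α * x ^ 2 + β * x + γ = 0 → 2 * α * x + β = 0)
    (hu : 0 < α * u ^ 2 + β * u + γ) (hv : α * v ^ 2 + β * v + γ < 0) : False := by
  have hc : ContinuousOn (fun x : ℝ => α * x ^ 2 + β * x + γ) (Set.uIcc v u) := by
    fun_prop
  have h0 : (0 : ℝ) ∈ Set.uIcc (α * v ^ 2 + β * v + γ) (α * u ^ 2 + β * u + γ) := by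
    rw [Set.mem_uIcc]; left; constructor <;> linarith
  obtain ⟨x', -, hx'⟩ := intermediate_value_uIcc hc h0
  have hx'' : α * x' ^ 2 + β * x' + γ = 0 := hx'
  have hd := htan x' hx''
  have e1 : α * u ^ 2 + β * u + γ = α * (u - x') ^ 2 := by
    linear_combination (u - x') * hd + hx''
  have e2 : α * v ^ 2 + β * v + γ = α * (v - x') ^ 2 := by
    linear_combination (v - x') * hd + hx''
  rw [e1] at hu
  rw [e2] at hv
  have hα : 0 < α := by nlinarith [sq_nonneg (u - x')]
  nlinarith [mul_nonneg hα.le (sq_nonneg (v - x'))]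

lemma core {f : H → ℝ} {p1 p2 p3 m₁ m₂ m t : ℝ}
    (hruled : IsRuled (IGraph V0 f))
    (H1 : ∀ x : ℝ, f (x, 0, (p3 + p1 * p2 / 2 - m₁ * p1 ^ 2 / 2) - (p2 - m₁ * p1) * x - m₁ * x ^ 2 / 2)
      = (p2 - m₁ * p1) + m₁ * x)
    (H2 : ∀ x : ℝ, f (x, 0, (p3 + p1 * p2 / 2 - m₂ * p1 ^ 2 / 2) - (p2 - m₂ * p1) * x - m₂ * x ^ 2 / 2)
      = (p2 - m₂ * p1) + m₂ * x)
    (hlt1 : m₁ < m) (hlt2 : m < m₂) (ht : t ≠ 0) :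
    f (p1 + t, 0, p3 - p1 * p2 / 2 - p2 * t - m * t ^ 2 / 2) = p2 + t * m := by
  have ht2 : (0 : ℝ) < t ^ 2 := by positivity
  -- the graph point over the projected point
  have hr : ((p1 + t, f (p1 + t, 0, p3 - p1 * p2 / 2 - p2 * t - m * t ^ 2 / 2),
      (p3 - p1 * p2 / 2 - p2 * t - m * t ^ 2 / 2) +
        (p1 + t) * f (p1 + t, 0, p3 - p1 * p2 / 2 - p2 * t - m * t ^ 2 / 2) / 2) : H)
      ∈ IGraph V0 f := by
    rw [mem_graph_iff]
    exact congrArg f (by simp only [Prod.mk.injEq]; exact ⟨trivial, trivial, by ring⟩)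
  obtain ⟨q0, a, b, hab, hmem, hsub⟩ := hruled _ hr
  have ha : a ≠ 0 := ruling_a_ne hab hsub
  rw [gen_eq_line ha] at hmem hsub
  obtain ⟨q1, q2, q3⟩ := q0
  have H' := fun x => line_para hsub x
  simp only at H'
  obtain ⟨s, hs⟩ := hmem
  have hs1 := congrArg Prod.fst hs
  have hs2 := congrArg (fun r : H => r.2.1) hs
  have hs3 := congrArg (fun r : H => r.2.2) hs
  simp only [Hmul] at hs1 hs2 hs3
  have hss : s = (p1 + t) - q1 := by linarith
  subst hss
  have hz : p3 - p1 * p2 / 2 - p2 * t - m * t ^ 2 / 2 =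
      (q3 + q1 * q2 / 2 - b / a * q1 ^ 2 / 2) - (q2 - b / a * q1) * (p1 + t) -
        b / a * (p1 + t) ^ 2 / 2 := by
    linear_combination hs3 - ((p1 + t) / 2) * hs2
  have hy' : f (p1 + t, 0, p3 - p1 * p2 / 2 - p2 * t - m * t ^ 2 / 2) =
      (q2 - b / a * q1) + b / a * (p1 + t) := by
    have h := H' (p1 + t)
    rw [← hz] at h
    exact h
  rcases lt_trichotomy (q3 + q1 * q2 / 2 - b / a * q1 ^ 2 / 2 - (q2 - b / a * q1) * p1 -
      b / a * p1 ^ 2 / 2) (p3 - p1 * p2 / 2) with hζ | hζ | hζ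
  · -- ζ' < ζ₀ : contradiction via tangency with the m₂ line
    exfalso
    refine quad_key (α := (m₂ - b / a) / 2) (β := (p2 - m₂ * p1) - (q2 - b / a * q1))
      (γ := (q3 + q1 * q2 / 2 - b / a * q1 ^ 2 / 2) - (p3 + p1 * p2 / 2 - m₂ * p1 ^ 2 / 2))
      (u := p1 + t) (v := p1) ?_ ?_ ?_
    · intro x hQ
      have targ : (q3 + q1 * q2 / 2 - b / a * q1 ^ 2 / 2) - (q2 - b / a * q1) * x -
          b / a * x ^ 2 / 2 =
          (p3 + p1 * p2 / 2 - m₂ * p1 ^ 2 / 2) - (p2 - m₂ * p1) * x - m₂ * x ^ 2 / 2 := by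
        linear_combination hQ
      have tx : (q2 - b / a * q1) + b / a * x = (p2 - m₂ * p1) + m₂ * x := by
        rw [← H' x, targ]; exact H2 x
      linear_combination (-1 : ℝ) * tx
    · -- value at p1 + t is (m₂ - m) t²/2 > 0
      have e : (m₂ - b / a) / 2 * (p1 + t) ^ 2 +
          ((p2 - m₂ * p1) - (q2 - b / a * q1)) * (p1 + t) +
          ((q3 + q1 * q2 / 2 - b / a * q1 ^ 2 / 2) - (p3 + p1 * p2 / 2 - m₂ * p1 ^ 2 / 2)) =
          (m₂ - m) * t ^ 2 / 2 := by
        linear_combination (-1 : ℝ) * hz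
      rw [e]
      nlinarith [mul_pos (sub_pos.mpr hlt2) ht2]
    ·
      have e : (m₂ - b / a) / 2 * p1 ^ 2 +
          ((p2 - m₂ * p1) - (q2 - b / a * q1)) * p1 +
          ((q3 + q1 * q2 / 2 - b / a * q1 ^ 2 / 2) - (p3 + p1 * p2 / 2 - m₂ * p1 ^ 2 / 2)) =
          (q3 + q1 * q2 / 2 - b / a * q1 ^ 2 / 2 - (q2 - b / a * q1) * p1 -
            b / a * p1 ^ 2 / 2) - (p3 - p1 * p2 / 2) := by
        ring
      rw [e]
      linarith
  · -- ζ' = ζ₀ : the ruling passes through p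
    have e0 : (q2 - b / a * q1) + b / a * p1 = (p2 - m₁ * p1) + m₁ * p1 := by
      have targ : (q3 + q1 * q2 / 2 - b / a * q1 ^ 2 / 2) - (q2 - b / a * q1) * p1 -
          b / a * p1 ^ 2 / 2 =
          (p3 + p1 * p2 / 2 - m₁ * p1 ^ 2 / 2) - (p2 - m₁ * p1) * p1 - m₁ * p1 ^ 2 / 2 := by
        linear_combination hζ
      rw [← H' p1, targ]; exact H1 p1
    have hq : (b / a - m) * t ^ 2 = 0 := by
      linear_combination (2 : ℝ) * hz + 2 * hζ - 2 * t * e0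
    have hμm : b / a = m := by
      rcases mul_eq_zero.mp hq with h | h
      · linarith [sub_eq_zero.mp h]
      · exact absurd h (by positivity)
    rw [hy']
    linear_combination e0 + t * hμm
  · -- ζ₀ < ζ' : contradiction via tangency with the m₁ line
    exfalso
    refine quad_key (α := (m₁ - b / a) / 2) (β := (p2 - m₁ * p1) - (q2 - b / a * q1))
      (γ := (q3 + q1 * q2 / 2 - b / a * q1 ^ 2 / 2) - (p3 + p1 * p2 / 2 - m₁ * p1 ^ 2 / 2))
      (u := p1) (v := p1 + t) ?_ ?_ ?_
    · intro x hQ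
      have targ : (q3 + q1 * q2 / 2 - b / a * q1 ^ 2 / 2) - (q2 - b / a * q1) * x -
          b / a * x ^ 2 / 2 =
          (p3 + p1 * p2 / 2 - m₁ * p1 ^ 2 / 2) - (p2 - m₁ * p1) * x - m₁ * x ^ 2 / 2 := by
        linear_combination hQ
      have tx : (q2 - b / a * q1) + b / a * x = (p2 - m₁ * p1) + m₁ * x := by
        rw [← H' x, targ]; exact H1 x
      linear_combination (-1 : ℝ) * tx
    · have e : (m₁ - b / a) / 2 * p1 ^ 2 +
          ((p2 - m₁ * p1) - (q2 - b / a * q1)) * p1 +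
          ((q3 + q1 * q2 / 2 - b / a * q1 ^ 2 / 2) - (p3 + p1 * p2 / 2 - m₁ * p1 ^ 2 / 2)) =
          (q3 + q1 * q2 / 2 - b / a * q1 ^ 2 / 2 - (q2 - b / a * q1) * p1 -
            b / a * p1 ^ 2 / 2) - (p3 - p1 * p2 / 2) := by
        ring
      rw [e]
      linarith
    · have e : (m₁ - b / a) / 2 * (p1 + t) ^ 2 +
          ((p2 - m₁ * p1) - (q2 - b / a * q1)) * (p1 + t) +
          ((q3 + q1 * q2 / 2 - b / a * q1 ^ 2 / 2) - (p3 + p1 * p2 / 2 - m₁ * p1 ^ 2 / 2)) =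
          (m₁ - m) * t ^ 2 / 2 := by
        linear_combination (-1 : ℝ) * hz
      rw [e]
      nlinarith [mul_pos (sub_pos.mpr hlt1) ht2]

/-- if two rulings of slopes `m₁ < m₂` of a ruled entire intrinsic
graph `Γ_f` pass through a common point `p`, then for every `m ∈ [m₁, m₂]` the
horizontal line of slope `m` through `p` is contained in `Γ_f`. -/
theorem fan_of_rulings
    (f : H → ℝ) (hf : ContinuousOn f V0)
    (hruled : IsRuled (IGraph V0 f))
    (p : H) (hp : p ∈ IGraph V0 f)
    (m₁ m₂ : ℝ) (hm : m₁ < m₂)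
    (h₁ : horizLine p m₁ ⊆ IGraph V0 f)
    (h₂ : horizLine p m₂ ⊆ IGraph V0 f) :
    ∀ m ∈ Set.Icc m₁ m₂, horizLine p m ⊆ IGraph V0 f := by
  intro m hmIcc
  rcases hmIcc.1.eq_or_lt with rfl | hlt1
  · exact h₁
  rcases hmIcc.2.eq_or_lt with rfl | hlt2
  · exact h₂
  obtain ⟨p1, p2, p3⟩ := p
  intro q hq
  obtain ⟨t, rfl⟩ := hq
  rcases eq_or_ne t 0 with rfl | ht
  · have e : Hmul (p1, p2, p3) (0, 0 * m, 0) = (p1, p2, p3) := by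
      simp only [Hmul, Prod.mk.injEq]
      exact ⟨by ring, by ring, by ring⟩
    rw [e]
    exact hp
  have H1 := fun x => line_para h₁ x
  have H2 := fun x => line_para h₂ x
  simp only at H1 H2
  rw [mem_graph_iff]
  have e2 : (Hmul (p1, p2, p3) (t, t * m, 0)).2.1 = p2 + t * m := by
    simp [Hmul]
  have harg : (((Hmul (p1, p2, p3) (t, t * m, 0)).1 : ℝ), (0 : ℝ),
      (Hmul (p1, p2, p3) (t, t * m, 0)).2.2 -
        (Hmul (p1, p2, p3) (t, t * m, 0)).1 * (Hmul (p1, p2, p3) (t, t * m, 0)).2.1 / 2)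
      = ((p1 + t : ℝ), (0 : ℝ), p3 - p1 * p2 / 2 - p2 * t - m * t ^ 2 / 2) := by
    simp only [Hmul, Prod.mk.injEq]
    exact ⟨trivial, trivial, by ring⟩
  rw [harg, e2]
  exact (core hruled H1 H2 hlt1 hlt2 ht).symm
end
end

section
/- Let f : V₀ → ℝ be continuous and suppose every point of Γ_f lies on a horizontal line contained in Γ_f. Let x₀ ≠ 0 and z₀ ∈ ℝ, and suppose there exist horizontal lines L₁, L₂ ⊆ Γ_f with slopes m₁ and m₂ respectively such that −(m₁/2)·x₀² < z₀ < −(m₂/2)·x₀². Then lim_{t→∞} f(t·x₀, 0, t²·z₀)/t = −2z₀/x₀. -/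
open MeasureTheory Filter

noncomputable section

/-- "Master parabola" property: along the parabola `ζ(s) = A + B s - (M/2) s²`,
`f` takes the value `-B + M s`. -/
def MP (f : H → ℝ) (A B M : ℝ) : Prop :=
  ∀ s : ℝ, f (s, 0, A + B * s - M / 2 * s ^ 2) = -B + M * s

lemma graph_mem_eq {f : H → ℝ} {q : H} (h : q ∈ IGraph V0 f) :
    f (q.1, 0, q.2.2 - q.1 * q.2.1 / 2) = q.2.1 := by
  obtain ⟨x, z, -, rfl⟩ := h
  show f (x, 0, z + x * f (x, 0, z) / 2 - x * f (x, 0, z) / 2) = f (x, 0, z)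
  rw [show z + x * f (x, 0, z) / 2 - x * f (x, 0, z) / 2 = z from by ring]

lemma line_MP {f : H → ℝ} {p : H} {m : ℝ} (h : horizLine p m ⊆ IGraph V0 f) :
    MP f (p.2.2 + p.1 * p.2.1 / 2 - m / 2 * p.1 ^ 2) (-p.2.1 + m * p.1) m := by
  intro s
  have hq := graph_mem_eq (h ⟨s - p.1, rfl⟩)
  simp only [Hmul] at hq
  rw [show p.1 + (s - p.1) = s from by ring] at hq
  rw [show p.2.2 + 0 + (p.1 * ((s - p.1) * m) - p.2.1 * (s - p.1)) / 2
        - s * (p.2.1 + (s - p.1) * m) / 2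
      = p.2.2 + p.1 * p.2.1 / 2 - m / 2 * p.1 ^ 2 + (-p.2.1 + m * p.1) * s - m / 2 * s ^ 2
      from by ring] at hq
  rw [hq]; ring

lemma gen_a_ne_zero {f : H → ℝ} {q : H} {a b : ℝ}
    (hab : (a, b) ≠ ((0 : ℝ), (0 : ℝ))) (h : horizLineGen q a b ⊆ IGraph V0 f) : a ≠ 0 := by
  rintro rfl
  have hb : b ≠ 0 := by
    intro hb; exact hab (by rw [hb])
  have h0 := graph_mem_eq (h ⟨0, rfl⟩)
  have h1 := graph_mem_eq (h ⟨1, rfl⟩)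
  simp only [Hmul] at h0 h1
  rw [show q.1 + (0:ℝ) * 0 = q.1 from by ring,
      show q.2.2 + 0 + (q.1 * ((0:ℝ) * b) - q.2.1 * ((0:ℝ) * 0)) / 2
          - q.1 * (q.2.1 + (0:ℝ) * b) / 2 = q.2.2 - q.1 * q.2.1 / 2 from by ring] at h0
  rw [show q.1 + (1:ℝ) * 0 = q.1 from by ring,
      show q.2.2 + 0 + (q.1 * ((1:ℝ) * b) - q.2.1 * ((1:ℝ) * 0)) / 2
          - q.1 * (q.2.1 + (1:ℝ) * b) / 2 = q.2.2 - q.1 * q.2.1 / 2 from by ring] at h1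
  rw [h0] at h1
  apply hb
  linarith

lemma gen_MP {f : H → ℝ} {q : H} {a b : ℝ} (ha : a ≠ 0)
    (h : horizLineGen q a b ⊆ IGraph V0 f) :
    MP f (q.2.2 + q.1 * q.2.1 / 2 - (b / a) / 2 * q.1 ^ 2) (-q.2.1 + (b / a) * q.1) (b / a) := by
  intro s
  have hq := graph_mem_eq (h ⟨(s - q.1) / a, rfl⟩)
  simp only [Hmul] at hq
  rw [show q.1 + (s - q.1) / a * a = s from by field_simp; ring] at hq
  rw [show q.2.2 + 0 + (q.1 * ((s - q.1) / a * b) - q.2.1 * ((s - q.1) / a * a)) / 2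
        - s * (q.2.1 + (s - q.1) / a * b) / 2
      = q.2.2 + q.1 * q.2.1 / 2 - (b / a) / 2 * q.1 ^ 2 + (-q.2.1 + (b / a) * q.1) * s
        - (b / a) / 2 * s ^ 2 from by field_simp; ring] at hq
  rw [hq]; field_simp; ring

lemma ruling {f : H → ℝ} (hruled : IsRuled (IGraph V0 f)) (x z : ℝ) :
    ∃ A B M : ℝ, (A + B * x - M / 2 * x ^ 2 = z) ∧ MP f A B M := by
  have hp : (x, f (x, 0, z), z + x * f (x, 0, z) / 2) ∈ IGraph V0 f := ⟨x, z, rfl, rfl⟩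
  obtain ⟨q, a, b, hab, hmem, hsub⟩ := hruled _ hp
  have ha : a ≠ 0 := gen_a_ne_zero hab hsub
  refine ⟨q.2.2 + q.1 * q.2.1 / 2 - (b / a) / 2 * q.1 ^ 2, -q.2.1 + (b / a) * q.1, b / a,
    ?_, gen_MP ha hsub⟩
  obtain ⟨t, ht⟩ := hmem
  rw [Hmul] at ht
  simp only [Prod.mk.injEq] at ht
  obtain ⟨h1, h2, h3⟩ := ht
  rw [h2] at h3
  have hz : z = q.2.2 + 0 + (q.1 * (t * b) - q.2.1 * (t * a)) / 2
      - x * (q.2.1 + t * b) / 2 := by linarith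
  subst hz
  subst h1
  field_simp
  ring

lemma nocross {f : H → ℝ} {A B M A' B' M' : ℝ} (h : MP f A B M) (h' : MP f A' B' M') :
    (∀ s : ℝ, 0 ≤ (A - A') + (B - B') * s - (M - M') / 2 * s ^ 2) ∨
    (∀ s : ℝ, (A - A') + (B - B') * s - (M - M') / 2 * s ^ 2 ≤ 0) := by
  by_cases hzero : ∃ s₀ : ℝ, (A - A') + (B - B') * s₀ - (M - M') / 2 * s₀ ^ 2 = 0
  · obtain ⟨s₀, hs₀⟩ := hzero
    have hv : A + B * s₀ - M / 2 * s₀ ^ 2 = A' + B' * s₀ - M' / 2 * s₀ ^ 2 := by linarith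
    have he := h s₀
    rw [hv, h' s₀] at he
    have hBB : B - B' = (M - M') * s₀ := by linarith
    have hAA : A - A' = -((M - M') / 2 * s₀ ^ 2) := by linear_combination hs₀ - s₀ * hBB
    have key : ∀ s : ℝ, (A - A') + (B - B') * s - (M - M') / 2 * s ^ 2
        = -((M - M') / 2) * (s - s₀) ^ 2 := by
      intro s; linear_combination hAA + s * hBB
    rcases le_total M M' with hM | hM
    · left; intro s; rw [key s]
      exact mul_nonneg (by linarith) (sq_nonneg _)
    · right; intro s; rw [key s]
      have := mul_nonneg (by linarith : (0:ℝ) ≤ (M - M') / 2) (sq_nonneg (s - s₀))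
      linarith
  · push_neg at hzero
    by_contra hcon
    push_neg at hcon
    obtain ⟨⟨s₁, hs₁⟩, s₂, hs₂⟩ := hcon
    have hc : ContinuousOn (fun s : ℝ => (A - A') + (B - B') * s - (M - M') / 2 * s ^ 2)
        (Set.uIcc s₁ s₂) := by fun_prop
    have h0 : (0:ℝ) ∈ Set.uIcc ((A - A') + (B - B') * s₁ - (M - M') / 2 * s₁ ^ 2)
        ((A - A') + (B - B') * s₂ - (M - M') / 2 * s₂ ^ 2) :=
      Set.mem_uIcc.mpr (Or.inl ⟨le_of_lt hs₁, le_of_lt hs₂⟩)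
    obtain ⟨c, -, hc0⟩ := intermediate_value_uIcc hc h0
    exact hzero c hc0

lemma key_ineq (f : H → ℝ) (hruled : IsRuled (IGraph V0 f))
    (x₀ z₀ m₁ m₂ A₁ B₁ A₂ B₂ t a1 a2 bb S : ℝ)
    (hMP1 : MP f A₁ B₁ m₁) (hMP2 : MP f A₂ B₂ m₂)
    (ha1 : a1 = t ^ 2 * z₀ - (A₁ + B₁ * (t * x₀) - m₁ / 2 * (t * x₀) ^ 2))
    (ha2 : a2 = (A₂ + B₂ * (t * x₀) - m₂ / 2 * (t * x₀) ^ 2) - t ^ 2 * z₀)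
    (hbb : bb = -(f (t * x₀, 0, t ^ 2 * z₀)) - B₁ + m₁ * (t * x₀))
    (hS : S = (B₂ - B₁) + (m₁ - m₂) * (t * x₀))
    (h1 : 0 < a1) (h2 : 0 < a2) :
    ((a1 + a2) * bb - S * a1) ^ 2 ≤ a1 * a2 * (2 * (m₁ - m₂) * (a1 + a2) - S ^ 2) := by
  obtain ⟨A, B, M, hpt, hMP⟩ := ruling hruled (t * x₀) (t ^ 2 * z₀)
  have hF : f (t * x₀, 0, t ^ 2 * z₀) = -B + M * (t * x₀) := by
    have h := hMP (t * x₀)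
    rw [hpt] at h
    exact h
  -- first line: D₁ = ζ_t - ζ₁ ≥ 0
  have hval1 : (A - A₁) + (B - B₁) * (t * x₀) - (M - m₁) / 2 * (t * x₀) ^ 2 = a1 := by
    rw [ha1]; linear_combination hpt
  have hD1 : ∀ s : ℝ, 0 ≤ (A - A₁) + (B - B₁) * s - (M - m₁) / 2 * s ^ 2 := by
    rcases nocross hMP hMP1 with h | h
    · exact h
    · exfalso
      have := h (t * x₀)
      rw [hval1] at this
      linarith
  have hq1 : ∀ u : ℝ, 0 ≤ (m₁ - M) / 2 * (u * u) + ((B - B₁) - (M - m₁) * (t * x₀)) * u + a1 := by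
    intro u
    have e : (m₁ - M) / 2 * (u * u) + ((B - B₁) - (M - m₁) * (t * x₀)) * u + a1
        = (A - A₁) + (B - B₁) * (t * x₀ + u) - (M - m₁) / 2 * (t * x₀ + u) ^ 2 := by
      linear_combination -hval1
    rw [e]; exact hD1 _
  have hdisc1 := discrim_le_zero hq1
  simp only [discrim] at hdisc1
  -- second line: D₂ = ζ₂ - ζ_t ≥ 0
  have hval2 : (A₂ - A) + (B₂ - B) * (t * x₀) - (m₂ - M) / 2 * (t * x₀) ^ 2 = a2 := by
    rw [ha2]; linear_combination -hpt
  have hD2 : ∀ s : ℝ, 0 ≤ (A₂ - A) + (B₂ - B) * s - (m₂ - M) / 2 * s ^ 2 := by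
    rcases nocross hMP2 hMP with h | h
    · exact h
    · exfalso
      have := h (t * x₀)
      rw [hval2] at this
      linarith
  have hq2 : ∀ u : ℝ, 0 ≤ (M - m₂) / 2 * (u * u) + ((B₂ - B) - (m₂ - M) * (t * x₀)) * u + a2 := by
    intro u
    have e : (M - m₂) / 2 * (u * u) + ((B₂ - B) - (m₂ - M) * (t * x₀)) * u + a2
        = (A₂ - A) + (B₂ - B) * (t * x₀ + u) - (m₂ - M) / 2 * (t * x₀ + u) ^ 2 := by
      linear_combination -hval2
    rw [e]; exact hD2 _
  have hdisc2 := discrim_le_zero hq2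
  simp only [discrim] at hdisc2
  -- rewrite in terms of bb and S
  have hb1 : (B - B₁) - (M - m₁) * (t * x₀) = bb := by rw [hbb, hF]; ring
  have hb2 : (B₂ - B) - (m₂ - M) * (t * x₀) = S - bb := by rw [hS, hbb, hF]; ring
  rw [hb1] at hdisc1
  rw [hb2] at hdisc2
  have e1 : bb ^ 2 ≤ 2 * (m₁ - M) * a1 := by linarith
  have e2 : (S - bb) ^ 2 ≤ 2 * (M - m₂) * a2 := by linarith
  have p1 : a2 * bb ^ 2 ≤ a2 * (2 * (m₁ - M) * a1) := mul_le_mul_of_nonneg_left e1 h2.le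
  have p2 : a1 * (S - bb) ^ 2 ≤ a1 * (2 * (M - m₂) * a2) := mul_le_mul_of_nonneg_left e2 h1.le
  have idr : a2 * (2 * (m₁ - M) * a1) + a1 * (2 * (M - m₂) * a2)
      = 2 * (m₁ - m₂) * (a1 * a2) := by ring
  have p3 : a2 * bb ^ 2 + a1 * (S - bb) ^ 2 ≤ 2 * (m₁ - m₂) * (a1 * a2) := by linarith
  have p4 := mul_le_mul_of_nonneg_left p3 (by linarith : (0:ℝ) ≤ a1 + a2)
  have idl : ((a1 + a2) * bb - S * a1) ^ 2
      = (a1 + a2) * (a2 * bb ^ 2 + a1 * (S - bb) ^ 2) - S ^ 2 * (a1 * a2) := by ring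
  have idr2 : a1 * a2 * (2 * (m₁ - m₂) * (a1 + a2) - S ^ 2)
      = (a1 + a2) * (2 * (m₁ - m₂) * (a1 * a2)) - S ^ 2 * (a1 * a2) := by ring
  rw [idl, idr2]
  linarith

/-- scaling limit of a ruled entire intrinsic graph in the wedge
region.  If `Γ_f` contains rulings of slopes `m₁` and `m₂` with
`−(m₁/2)x₀² < z₀ < −(m₂/2)x₀²` and `x₀ ≠ 0`, then
`f(t x₀, 0, t² z₀)/t → −2z₀/x₀` as `t → ∞`. -/
theorem scaling_limit_wedge
    (f : H → ℝ) (hf : ContinuousOn f V0)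
    (hruled : IsRuled (IGraph V0 f))
    (x₀ z₀ : ℝ) (hx₀ : x₀ ≠ 0)
    (m₁ m₂ : ℝ) (p₁ p₂ : H)
    (h₁ : horizLine p₁ m₁ ⊆ IGraph V0 f)
    (h₂ : horizLine p₂ m₂ ⊆ IGraph V0 f)
    (hz₁ : -(m₁ / 2) * x₀ ^ 2 < z₀) (hz₂ : z₀ < -(m₂ / 2) * x₀ ^ 2) :
    Tendsto (fun t : ℝ => f (t * x₀, 0, t ^ 2 * z₀) / t) atTop
      (nhds (-2 * z₀ / x₀)) := by
  obtain ⟨A₁, B₁, hMP1⟩ : ∃ A B : ℝ, MP f A B m₁ := ⟨_, _, line_MP h₁⟩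
  obtain ⟨A₂, B₂, hMP2⟩ : ∃ A B : ℝ, MP f A B m₂ := ⟨_, _, line_MP h₂⟩
  set c₁ : ℝ := z₀ + m₁ / 2 * x₀ ^ 2 with hc1def
  set c₂ : ℝ := -z₀ - m₂ / 2 * x₀ ^ 2 with hc2def
  have hc1pos : 0 < c₁ := by rw [hc1def]; linarith
  have hc2pos : 0 < c₂ := by rw [hc2def]; linarith
  have hden0 : c₁ + c₂ ≠ 0 := by positivity
  -- normalized functions
  set n1 : ℝ → ℝ := fun t => c₁ - B₁ * x₀ * t⁻¹ - A₁ * t⁻¹ ^ 2 with hn1def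
  set n2 : ℝ → ℝ := fun t => c₂ + B₂ * x₀ * t⁻¹ + A₂ * t⁻¹ ^ 2 with hn2def
  set nS : ℝ → ℝ := fun t => (m₁ - m₂) * x₀ + (B₂ - B₁) * t⁻¹ with hnSdef
  set φ : ℝ → ℝ :=
    fun t => (-(f (t * x₀, 0, t ^ 2 * z₀)) - B₁ + m₁ * (t * x₀)) * t⁻¹ with hφdef
  -- limits of normalized functions
  have hinv : Tendsto (fun t : ℝ => t⁻¹) atTop (nhds 0) := tendsto_inv_atTop_zero
  have hn1 : Tendsto n1 atTop (nhds c₁) := by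
    have h : Tendsto (fun t : ℝ => c₁ - B₁ * x₀ * t⁻¹ - A₁ * t⁻¹ ^ 2) atTop
        (nhds (c₁ - B₁ * x₀ * 0 - A₁ * 0 ^ 2)) :=
      (tendsto_const_nhds.sub (hinv.const_mul _)).sub ((hinv.pow 2).const_mul _)
    rw [hn1def]; simpa using h
  have hn2 : Tendsto n2 atTop (nhds c₂) := by
    have h : Tendsto (fun t : ℝ => c₂ + B₂ * x₀ * t⁻¹ + A₂ * t⁻¹ ^ 2) atTop
        (nhds (c₂ + B₂ * x₀ * 0 + A₂ * 0 ^ 2)) :=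
      (tendsto_const_nhds.add (hinv.const_mul _)).add ((hinv.pow 2).const_mul _)
    rw [hn2def]; simpa using h
  have hnS : Tendsto nS atTop (nhds ((m₁ - m₂) * x₀)) := by
    have h : Tendsto (fun t : ℝ => (m₁ - m₂) * x₀ + (B₂ - B₁) * t⁻¹) atTop
        (nhds ((m₁ - m₂) * x₀ + (B₂ - B₁) * 0)) :=
      tendsto_const_nhds.add (hinv.const_mul _)
    rw [hnSdef]; simpa using h
  have hevn1 : ∀ᶠ t in atTop, 0 < n1 t := hn1.eventually_const_lt hc1pos
  have hevn2 : ∀ᶠ t in atTop, 0 < n2 t := hn2.eventually_const_lt hc2pos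
  -- the key eventual inequality
  have evkey : ∀ᶠ t in atTop,
      ((n1 t + n2 t) * φ t - nS t * n1 t) ^ 2
        ≤ n1 t * n2 t * (2 * (m₁ - m₂) * (n1 t + n2 t) - nS t ^ 2) := by
    filter_upwards [eventually_gt_atTop 0, hevn1, hevn2] with t ht hp1 hp2
    have ht0 : t ≠ 0 := ne_of_gt ht
    have ht2 : (0:ℝ) < t ^ 2 := by positivity
    have ha1 : n1 t * t ^ 2 = t ^ 2 * z₀ - (A₁ + B₁ * (t * x₀) - m₁ / 2 * (t * x₀) ^ 2) := by
      rw [hn1def, hc1def]; field_simp; ring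
    have ha2 : n2 t * t ^ 2 = (A₂ + B₂ * (t * x₀) - m₂ / 2 * (t * x₀) ^ 2) - t ^ 2 * z₀ := by
      rw [hn2def, hc2def]; field_simp; ring
    have hbb : φ t * t = -(f (t * x₀, 0, t ^ 2 * z₀)) - B₁ + m₁ * (t * x₀) := by
      rw [hφdef]; field_simp
    have hSS : nS t * t = (B₂ - B₁) + (m₁ - m₂) * (t * x₀) := by
      rw [hnSdef]; field_simp; ring
    have hkey := key_ineq f hruled x₀ z₀ m₁ m₂ A₁ B₁ A₂ B₂ t
      (n1 t * t ^ 2) (n2 t * t ^ 2) (φ t * t) (nS t * t) hMP1 hMP2 ha1 ha2 hbb hSS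
      (mul_pos hp1 ht2) (mul_pos hp2 ht2)
    have hX : ((n1 t * t ^ 2 + n2 t * t ^ 2) * (φ t * t) - nS t * t * (n1 t * t ^ 2)) ^ 2
        = (((n1 t + n2 t) * φ t - nS t * n1 t) ^ 2) * t ^ 6 := by ring
    have hY : n1 t * t ^ 2 * (n2 t * t ^ 2)
          * (2 * (m₁ - m₂) * (n1 t * t ^ 2 + n2 t * t ^ 2) - (nS t * t) ^ 2)
        = (n1 t * n2 t * (2 * (m₁ - m₂) * (n1 t + n2 t) - nS t ^ 2)) * t ^ 6 := by ring
    rw [hX, hY] at hkey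
    exact le_of_mul_le_mul_right hkey (by positivity)
  -- the error term tends to 0
  have hE : Tendsto (fun t => n1 t * n2 t * (2 * (m₁ - m₂) * (n1 t + n2 t) - nS t ^ 2))
      atTop (nhds 0) := by
    have h := (hn1.mul hn2).mul (((hn1.add hn2).const_mul (2 * (m₁ - m₂))).sub (hnS.pow 2))
    have h0 : c₁ * c₂ * (2 * (m₁ - m₂) * (c₁ + c₂) - ((m₁ - m₂) * x₀) ^ 2) = 0 := by
      rw [hc1def, hc2def]; ring
    rw [h0] at h
    exact h
  -- ψ → 0
  have hψsq : Tendsto (fun t => ((n1 t + n2 t) * φ t - nS t * n1 t) ^ 2) atTop (nhds 0) :=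
    squeeze_zero' (Eventually.of_forall fun t => sq_nonneg _) evkey hE
  have hψ : Tendsto (fun t => (n1 t + n2 t) * φ t - nS t * n1 t) atTop (nhds 0) := by
    have hs : Tendsto (fun t => Real.sqrt (((n1 t + n2 t) * φ t - nS t * n1 t) ^ 2)) atTop
        (nhds 0) := (Real.continuous_sqrt.tendsto' 0 0 (by simp)).comp hψsq
    simp only [Real.sqrt_sq_eq_abs] at hs
    exact squeeze_zero_norm (fun t => le_of_eq (Real.norm_eq_abs _)) hs
  -- φ converges
  have hnum : Tendsto (fun t => ((n1 t + n2 t) * φ t - nS t * n1 t) + nS t * n1 t) atTop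
      (nhds (0 + (m₁ - m₂) * x₀ * c₁)) := hψ.add (hnS.mul hn1)
  have hnum' : Tendsto (fun t => (n1 t + n2 t) * φ t) atTop (nhds ((m₁ - m₂) * x₀ * c₁)) := by
    rw [← zero_add ((m₁ - m₂) * x₀ * c₁)]
    exact hnum.congr fun t => by ring
  have hφ : Tendsto φ atTop (nhds ((m₁ - m₂) * x₀ * c₁ / (c₁ + c₂))) := by
    have h := hnum'.div (hn1.add hn2) hden0
    apply h.congr'
    filter_upwards [hevn1, hevn2] with t hp1 hp2
    exact mul_div_cancel_left₀ _ (by linarith)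
  -- assemble the final limit
  have hfinal : Tendsto (fun t : ℝ => m₁ * x₀ - B₁ * t⁻¹ - φ t) atTop
      (nhds (m₁ * x₀ - B₁ * 0 - (m₁ - m₂) * x₀ * c₁ / (c₁ + c₂))) :=
    (tendsto_const_nhds.sub (hinv.const_mul _)).sub hφ
  have h2d : m₁ * x₀ ^ 2 - x₀ ^ 2 * m₂ ≠ 0 := by
    intro h
    apply hden0
    rw [hc1def, hc2def]
    linarith
  have hval : m₁ * x₀ - B₁ * 0 - (m₁ - m₂) * x₀ * c₁ / (c₁ + c₂) = -2 * z₀ / x₀ := by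
    rw [hc1def, hc2def]
    rw [show z₀ + m₁ / 2 * x₀ ^ 2 + (-z₀ - m₂ / 2 * x₀ ^ 2) = (m₁ * x₀ ^ 2 - x₀ ^ 2 * m₂) / 2
      from by ring]
    have hm : m₁ - m₂ ≠ 0 := fun h => h2d (by rw [show m₁ = m₂ by linarith]; ring)
    field_simp
    ring
  rw [hval] at hfinal
  apply hfinal.congr'
  filter_upwards [eventually_ne_atTop (0:ℝ)] with t ht0
  rw [hφdef]
  field_simp
  ring
end
end

section
/- Let f : V₀ → ℝ be continuous and suppose every point of Γ_f lies on a horizontal line contained in Γ_f. Suppose the set M = {m ∈ ℝ : some horizontal line of slope m is contained in Γ_f} is nonempty and bounded below, and let m∞ = inf M. Then for every x₀ ≠ 0 and every z₀ with z₀ > −(m∞/2)·x₀², one has lim_{t→∞} f(t·x₀, 0, t²·z₀)/t = m∞·x₀. -/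
open MeasureTheory Filter

noncomputable section

/- ### Auxiliary lemmas -/

lemma mem_IGraph_iff (f : H → ℝ) (X Y Z : ℝ) :
    ((X, Y, Z) : H) ∈ IGraph V0 f ↔ Y = f (X, 0, Z - X*Y/2) := by
  constructor
  · rintro ⟨x, z, -, h⟩
    simp only [Prod.mk.injEq] at h
    obtain ⟨h1, h2, h3⟩ := h
    subst h1
    have hz : Z - X*Y/2 = z := by rw [h3, h2]; ring
    rw [hz]; exact h2
  · intro h
    refine ⟨X, Z - X*Y/2, rfl, ?_⟩
    rw [Prod.mk.injEq, Prod.mk.injEq]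
    exact ⟨rfl, h, by rw [← h]; ring⟩

lemma quad_nonneg_at (p b c x : ℝ) (hp : 0 < p) (hx1 : 1 ≤ x) (hx2 : |b| + |c| ≤ p * x) :
    0 ≤ p*x^2 + b*x + c := by
  have hb : -|b| ≤ b := neg_abs_le b
  have hc : -|c| ≤ c := neg_abs_le c
  have hx0 : (0:ℝ) ≤ x := by linarith
  have hbx : (-|b|)*x ≤ b*x := mul_le_mul_of_nonneg_right hb hx0
  have h1 : x*|c| ≤ x*(p*x - |b|) :=
    mul_le_mul_of_nonneg_left (by linarith) hx0
  have h2 : |c| ≤ x*|c| := by nlinarith [abs_nonneg c]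
  nlinarith

lemma root_of_sign_change {q : ℝ → ℝ} (hq : Continuous q) {x₁ x₂ : ℝ}
    (h1 : q x₁ ≤ 0) (h2 : 0 ≤ q x₂) : ∃ r, q r = 0 := by
  have h := intermediate_value_uIcc (a := x₁) (b := x₂) hq.continuousOn
  have h0 : (0:ℝ) ∈ Set.uIcc (q x₁) (q x₂) := Set.mem_uIcc.2 (Or.inl ⟨h1, h2⟩)
  obtain ⟨r, -, hr⟩ := h h0
  exact ⟨r, hr⟩

/-- Characteristic curve attached to a horizontal line of slope `m` in the graph. -/
lemma curve_of_mem (f : H → ℝ) (m : ℝ) (p : H) (h : horizLine p m ⊆ IGraph V0 f) :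
    ∀ u : ℝ,
      f (u, 0, (p.2.2 - p.1*p.2.1/2 + (p.2.1 - m*p.1)*p.1 + m/2*p.1^2)
          - (p.2.1 - m*p.1)*u - m/2*u^2)
        = (p.2.1 - m*p.1) + m*u := by
  intro u
  have hmem : Hmul p (u - p.1, (u - p.1)*m, 0) ∈ IGraph V0 f := h ⟨u - p.1, rfl⟩
  have hmem' : ((p.1 + (u - p.1), p.2.1 + (u - p.1)*m,
      p.2.2 + 0 + (p.1*((u - p.1)*m) - p.2.1*(u - p.1))/2) : H) ∈ IGraph V0 f := hmem
  rw [mem_IGraph_iff] at hmem'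
  have harg : ((p.1 + (u - p.1) : ℝ), (0:ℝ),
      (p.2.2 + 0 + (p.1*((u - p.1)*m) - p.2.1*(u - p.1))/2)
        - (p.1 + (u - p.1))*(p.2.1 + (u - p.1)*m)/2)
      = ((u:ℝ), (0:ℝ), (p.2.2 - p.1*p.2.1/2 + (p.2.1 - m*p.1)*p.1 + m/2*p.1^2)
          - (p.2.1 - m*p.1)*u - m/2*u^2) := by
    rw [Prod.mk.injEq, Prod.mk.injEq]
    exact ⟨by ring, rfl, by ring⟩
  rw [harg] at hmem'
  rw [← hmem']
  ring

/-- The characteristic curve passes through the projection of any point on the line. -/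
lemma pass_through (f : H → ℝ) (m : ℝ) (p : H) {x y w : ℝ}
    (hq : ((x, y, w + x*y/2) : H) ∈ horizLine p m) :
    (p.2.2 - p.1*p.2.1/2 + (p.2.1 - m*p.1)*p.1 + m/2*p.1^2)
      - (p.2.1 - m*p.1)*x - m/2*x^2 = w := by
  obtain ⟨s, hs⟩ := hq
  simp only [Hmul, Prod.mk.injEq] at hs
  obtain ⟨h1, h2, h3⟩ := hs
  subst h1
  subst h2
  linear_combination -h3

/-- Two characteristic curves can only touch tangentially. -/
lemma tangent_sq (f : H → ℝ) {a c m a' c' m' r : ℝ}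
    (h1 : ∀ u : ℝ, f (u, 0, c - a*u - m/2*u^2) = a + m*u)
    (h2 : ∀ u : ℝ, f (u, 0, c' - a'*u - m'/2*u^2) = a' + m'*u)
    (hr : c - a*r - m/2*r^2 = c' - a'*r - m'/2*r^2) :
    ∀ x : ℝ, (c - c') - (a - a')*x - (m - m')/2*x^2 = -((m - m')/2)*(x - r)^2 := by
  have e1 := h1 r
  have e2 := h2 r
  rw [hr] at e1
  have h3 : a + m*r = a' + m'*r := by rw [← e1, ← e2]
  intro x
  linear_combination hr - (x - r) * h3

/-- Through any point of the half-plane region, every curve has slope at most `m`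
once the comparison curve of slope `m` lies strictly below. -/
lemma slope_le (f : H → ℝ) {m m' a c a' c' X W : ℝ}
    (hP : ∀ u : ℝ, f (u, 0, c - a*u - m/2*u^2) = a + m*u)
    (hP' : ∀ u : ℝ, f (u, 0, c' - a'*u - m'/2*u^2) = a' + m'*u)
    (hpass : c' - a'*X - m'/2*X^2 = W)
    (hApos : 0 < W - (c - a*X - m/2*X^2)) :
    m' ≤ m := by
  by_contra hcon
  push_neg at hcon
  have hppos : 0 < (m' - m)/2 := by linarith
  have hDX : (c - c') - (a - a')*X - (m - m')/2*X^2 < 0 := by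
    have heq : (c - c') - (a - a')*X - (m - m')/2*X^2
        = -(W - (c - a*X - m/2*X^2)) := by linear_combination -hpass
    rw [heq]; linarith
  set x₂ : ℝ := max 1 ((|a' - a| + |c - c'|)/((m' - m)/2)) with hx₂def
  have hx₂1 : (1:ℝ) ≤ x₂ := le_max_left _ _
  have hx₂2 : |a' - a| + |c - c'| ≤ (m' - m)/2 * x₂ := by
    have h := le_max_right 1 ((|a' - a| + |c - c'|)/((m' - m)/2))
    rw [div_le_iff₀ hppos] at h
    have h' : (1:ℝ) ⊔ ((|a' - a| + |c - c'|)/((m' - m)/2)) = x₂ := hx₂def.symm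
    rw [h'] at h
    linarith
  have hq0 := quad_nonneg_at ((m' - m)/2) (a' - a) (c - c') x₂ hppos hx₂1 hx₂2
  obtain ⟨r, hr⟩ := root_of_sign_change
    (q := fun v => (c - c') - (a - a')*v - (m - m')/2*v^2)
    (by fun_prop) (x₁ := X) (x₂ := x₂) (le_of_lt hDX) (by linarith)
  have hr' : (c - c') - (a - a')*r - (m - m')/2*r^2 = 0 := hr
  have hreq : c - a*r - m/2*r^2 = c' - a'*r - m'/2*r^2 := by linear_combination hr'
  have ht := tangent_sq f hP hP' hreq X
  nlinarith [sq_nonneg (X - r), mul_nonneg (le_of_lt hppos) (sq_nonneg (X - r))]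

/-- Key discriminant bound. -/
lemma key_bound (f : H → ℝ) {m m' a c a' c' X W : ℝ}
    (hP : ∀ u : ℝ, f (u, 0, c - a*u - m/2*u^2) = a + m*u)
    (hP' : ∀ u : ℝ, f (u, 0, c' - a'*u - m'/2*u^2) = a' + m'*u)
    (hpass : c' - a'*X - m'/2*X^2 = W)
    (hApos : 0 < W - (c - a*X - m/2*X^2))
    (hm' : m' ≤ m) :
    ((m - m')*X + (a - a'))^2 ≤ 2*(m - m')*(W - (c - a*X - m/2*X^2)) := by
  have hDle : ∀ u : ℝ, (c - c') - (a - a')*u - (m - m')/2*u^2 ≤ 0 := by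
    intro u
    by_contra hcon
    push_neg at hcon
    have hDX : (c - c') - (a - a')*X - (m - m')/2*X^2 < 0 := by
      have heq : (c - c') - (a - a')*X - (m - m')/2*X^2
          = -(W - (c - a*X - m/2*X^2)) := by linear_combination -hpass
      rw [heq]; linarith
    obtain ⟨r, hr⟩ := root_of_sign_change
      (q := fun v => (c - c') - (a - a')*v - (m - m')/2*v^2)
      (by fun_prop) (x₁ := X) (x₂ := u) (le_of_lt hDX) (le_of_lt hcon)
    have hr' : (c - c') - (a - a')*r - (m - m')/2*r^2 = 0 := hr
    have hreq : c - a*r - m/2*r^2 = c' - a'*r - m'/2*r^2 := by linear_combination hr'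
    have ht := tangent_sq f hP hP' hreq u
    nlinarith [mul_nonneg (show (0:ℝ) ≤ (m - m')/2 by linarith) (sq_nonneg (u - r))]
  have hEq : ∀ s : ℝ, 0 ≤ (m - m')/2*(s*s) + ((m - m')*X + (a - a'))*s
      + (W - (c - a*X - m/2*X^2)) := by
    intro s
    have hD := hDle (X + s)
    have heq : (m - m')/2*(s*s) + ((m - m')*X + (a - a'))*s + (W - (c - a*X - m/2*X^2))
        = -((c - c') - (a - a')*(X + s) - (m - m')/2*(X + s)^2) := by
      linear_combination -hpass
    rw [heq]; linarith
  have hd := discrim_le_zero hEq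
  rw [discrim] at hd
  nlinarith [hd]

/-- scaling limit of a ruled entire intrinsic graph in the
half-plane region.  Let `M` be the set of slopes of horizontal lines contained
in `Γ_f`; if `M` is nonempty and bounded below with `m∞ = inf M`, then for
`x₀ ≠ 0` and `z₀ > −(m∞/2)x₀²`, `f(t x₀, 0, t² z₀)/t → m∞ x₀` as `t → ∞`. -/
theorem scaling_limit_halfplane
    (f : H → ℝ) (hf : ContinuousOn f V0)
    (hruled : IsRuled (IGraph V0 f))
    (M : Set ℝ) (hM : M = {m : ℝ | ∃ p : H, horizLine p m ⊆ IGraph V0 f})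
    (hMne : M.Nonempty) (hMbdd : BddBelow M)
    (x₀ z₀ : ℝ) (hx₀ : x₀ ≠ 0) (hz₀ : z₀ > -(sInf M / 2) * x₀ ^ 2) :
    Tendsto (fun t : ℝ => f (t * x₀, 0, t ^ 2 * z₀) / t) atTop
      (nhds (sInf M * x₀)) := by
  -- every base point lies on a characteristic curve whose slope is in `M`
  have exists_curve : ∀ x w : ℝ, ∃ a c mm : ℝ, mm ∈ M ∧
      (∀ u : ℝ, f (u, 0, c - a*u - mm/2*u^2) = a + mm*u) ∧
      c - a*x - mm/2*x^2 = w := by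
    intro x w
    have hq : ((x, f (x, 0, w), w + x * f (x, 0, w)/2) : H) ∈ IGraph V0 f := by
      rw [mem_IGraph_iff]
      have h0 : w + x * f (x, 0, w)/2 - x * (f (x, 0, w))/2 = w := by ring
      rw [h0]
    obtain ⟨p, a₀, b₀, hab, hqmem, hsub⟩ := hruled _ hq
    have ha : a₀ ≠ 0 := by
      intro ha0
      have hb : b₀ ≠ 0 := by
        intro hb0; exact hab (by rw [ha0, hb0])
      have hmem1 : Hmul p ((0:ℝ), 0, 0) ∈ IGraph V0 f := hsub ⟨0, by norm_num⟩
      have hmem2 : Hmul p ((0:ℝ), 1, 0) ∈ IGraph V0 f := by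
        refine hsub ⟨1/b₀, ?_⟩
        rw [ha0]
        have h1 : (1/b₀)*b₀ = 1 := by field_simp
        have h2 : (1/b₀)*(0:ℝ) = 0 := by ring
        rw [h1, h2]
      have g1 := (mem_IGraph_iff f (p.1 + 0) (p.2.1 + 0)
        (p.2.2 + 0 + (p.1*0 - p.2.1*0)/2)).1 hmem1
      have g2 := (mem_IGraph_iff f (p.1 + 0) (p.2.1 + 1)
        (p.2.2 + 0 + (p.1*1 - p.2.1*0)/2)).1 hmem2
      have e : ((p.1 + 0 : ℝ), (0:ℝ),
          p.2.2 + 0 + (p.1*0 - p.2.1*0)/2 - (p.1 + 0)*(p.2.1 + 0)/2)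
          = ((p.1 + 0 : ℝ), (0:ℝ),
          p.2.2 + 0 + (p.1*1 - p.2.1*0)/2 - (p.1 + 0)*(p.2.1 + 1)/2) := by
        rw [Prod.mk.injEq, Prod.mk.injEq]
        exact ⟨rfl, rfl, by ring⟩
      rw [e] at g1
      have := g1.trans g2.symm
      linarith
    have hline : horizLine p (b₀/a₀) ⊆ IGraph V0 f := by
      rintro q' ⟨s, rfl⟩
      refine hsub ⟨s/a₀, ?_⟩
      have h1 : s/a₀*a₀ = s := div_mul_cancel₀ s ha
      have h2 : s/a₀*b₀ = s*(b₀/a₀) := by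
        rw [div_mul_eq_mul_div, mul_div_assoc]
      rw [h1, h2]
    have hmM : b₀/a₀ ∈ M := by rw [hM]; exact ⟨p, hline⟩
    have hqline : ((x, f (x, 0, w), w + x * f (x, 0, w)/2) : H)
        ∈ horizLine p (b₀/a₀) := by
      obtain ⟨t₀, ht₀⟩ := hqmem
      refine ⟨t₀*a₀, ?_⟩
      rw [ht₀]
      have h1 : t₀*a₀*(b₀/a₀) = t₀*b₀ := by field_simp
      rw [h1]
    exact ⟨_, _, b₀/a₀, hmM, curve_of_mem f (b₀/a₀) p hline,
      pass_through f (b₀/a₀) p hqline⟩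
  have hx2 : (0:ℝ) < x₀^2 := by positivity
  have hκ : 0 < z₀ + sInf M/2*x₀^2 := by nlinarith [hz₀]
  rw [Metric.tendsto_atTop]
  intro ε hε
  set K : ℝ := z₀ + (sInf M + 1)/2*x₀^2 + 1 with hKdef
  have hK : 0 < K := by rw [hKdef]; nlinarith
  have h64K : (0:ℝ) < 64*K := by linarith
  have h4x : (0:ℝ) < 4*(|x₀| + 1) := by positivity
  set δ : ℝ := min 1 (min (ε^2/(64*K)) (ε/(4*(|x₀| + 1)))) with hδdef
  have hδpos : 0 < δ := by
    refine lt_min one_pos (lt_min (div_pos (pow_pos hε 2) h64K) (div_pos hε h4x))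
  have hδ1 : δ ≤ 1 := min_le_left _ _
  have hδ2 : δ ≤ ε^2/(64*K) := le_trans (min_le_right _ _) (min_le_left _ _)
  have hδ3 : δ ≤ ε/(4*(|x₀| + 1)) := le_trans (min_le_right _ _) (min_le_right _ _)
  clear_value K δ
  obtain ⟨m, hmM, hmlt⟩ := exists_lt_of_csInf_lt hMne
    (lt_add_of_pos_right (sInf M) hδpos)
  have hmge : sInf M ≤ m := csInf_le hMbdd hmM
  have hple : ∃ p : H, horizLine p m ⊆ IGraph V0 f := by rw [hM] at hmM; exact hmM
  obtain ⟨p, hpl⟩ := hple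
  have hPm := curve_of_mem f m p hpl
  set a : ℝ := p.2.1 - m*p.1 with hadef
  set c : ℝ := p.2.2 - p.1*p.2.1/2 + a*p.1 + m/2*p.1^2 with hcdef
  clear_value a c
  refine ⟨max 1 (max ((|a*x₀| + |c| + 1)/(z₀ + sInf M/2*x₀^2))
    (max (|a*x₀| + |c| + 1) ((4*|a| + 1)/ε))), fun t ht => ?_⟩
  have ht1 : (1:ℝ) ≤ t := le_trans (le_max_left _ _) ht
  have htpos : (0:ℝ) < t := lt_of_lt_of_le one_pos ht1
  have ht2 : (|a*x₀| + |c| + 1)/(z₀ + sInf M/2*x₀^2) ≤ t :=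
    le_trans (le_trans (le_max_left _ _) (le_max_right _ _)) ht
  have ht3 : |a*x₀| + |c| + 1 ≤ t :=
    le_trans (le_trans (le_max_left _ _) (le_trans (le_max_right _ _) (le_max_right _ _))) ht
  have ht4 : (4*|a| + 1)/ε ≤ t :=
    le_trans (le_trans (le_max_right _ _) (le_trans (le_max_right _ _) (le_max_right _ _))) ht
  obtain ⟨a', c', m', hm'M, hP', hpass⟩ := exists_curve (t*x₀) (t^2*z₀)
  have hm'ge : sInf M ≤ m' := csInf_le hMbdd hm'M
  have haux1 : |a*x₀| + |c| + 1 ≤ (z₀ + sInf M/2*x₀^2)*t := by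
    rw [div_le_iff₀ hκ] at ht2
    linarith [ht2]
  have hF1 : -|a*x₀| ≤ a*x₀ := neg_abs_le _
  have hF2 : c ≤ |c| := le_abs_self _
  have hF2' : -|c| ≤ c := neg_abs_le _
  have hF3 : (|a*x₀| + |c| + 1)*t ≤ (z₀ + sInf M/2*x₀^2)*t*t :=
    mul_le_mul_of_nonneg_right haux1 htpos.le
  have hF4 : 0 ≤ (m - sInf M)*(t^2*x₀^2) :=
    mul_nonneg (by linarith) (by positivity)
  have hF6 : (-|a*x₀|)*t ≤ (a*x₀)*t := mul_le_mul_of_nonneg_right hF1 htpos.le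
  have hF6' : (a*x₀)*t ≤ |a*x₀| * t := mul_le_mul_of_nonneg_right (le_abs_self _) htpos.le
  have hF7 : 0 ≤ |c| * (t - 1) := mul_nonneg (abs_nonneg c) (by linarith)
  have hA_pos : 0 < t^2*z₀ - (c - a*(t*x₀) - m/2*(t*x₀)^2) := by
    linarith only [hF2, hF3, hF4, hF6, hF7, htpos, ht1]
  have hG4 : (|a*x₀| + |c|)*t ≤ t*t :=
    mul_le_mul_of_nonneg_right (by linarith) htpos.le
  have hG7 : 0 ≤ (sInf M + 1 - m)*(t^2*x₀^2) :=
    mul_nonneg (by linarith) (by positivity)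
  have hA_le : t^2*z₀ - (c - a*(t*x₀) - m/2*(t*x₀)^2) ≤ K*t^2 := by
    rw [hKdef]
    linarith only [hF2', hF6', hG4, hF7, hG7, ht3, htpos, ht1]
  have hm'le : m' ≤ m := slope_le f hPm hP' hpass hA_pos
  have hkey := key_bound f hPm hP' hpass hA_pos hm'le
  have hmm' : m - m' ≤ δ := by linarith
  have hP1 : 0 ≤ (δ - (m - m'))*(t^2*z₀ - (c - a*(t*x₀) - m/2*(t*x₀)^2)) :=
    mul_nonneg (by linarith) hA_pos.le
  have hP2 : 0 ≤ δ*((K*t^2) - (t^2*z₀ - (c - a*(t*x₀) - m/2*(t*x₀)^2))) :=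
    mul_nonneg hδpos.le (by linarith)
  have hBsq : ((m - m')*(t*x₀) + (a - a'))^2 ≤ 2*δ*(K*t^2) := by
    linarith only [hkey, hP1, hP2]
  have hq64 : δ*(64*K) ≤ ε^2 := by
    calc δ*(64*K) ≤ (ε^2/(64*K))*(64*K) := mul_le_mul_of_nonneg_right hδ2 h64K.le
      _ = ε^2 := div_mul_cancel₀ _ (ne_of_gt h64K)
  have h2δK : 2*δ*K ≤ ε^2/16 := by linarith only [hq64, sq_nonneg ε]
  have hP3 : (2*δ*K)*t^2 ≤ (ε^2/16)*t^2 :=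
    mul_le_mul_of_nonneg_right h2δK (sq_nonneg t)
  have hBabs : |(m - m')*(t*x₀) + (a - a')| ≤ ε/4*t := by
    have h1 : ((m - m')*(t*x₀) + (a - a'))^2 ≤ (ε/4*t)^2 := by
      have : (ε/4*t)^2 = (ε^2/16)*t^2 := by ring
      rw [this]
      linarith only [hBsq, hP3]
    calc |(m - m')*(t*x₀) + (a - a')|
        = Real.sqrt (((m - m')*(t*x₀) + (a - a'))^2) := (Real.sqrt_sq_eq_abs _).symm
      _ ≤ Real.sqrt ((ε/4*t)^2) := Real.sqrt_le_sqrt h1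
      _ = ε/4*t := Real.sqrt_sq (mul_nonneg (by linarith) htpos.le)
  have hy : f (t*x₀, 0, t^2*z₀) = a' + m'*(t*x₀) := by
    rw [← hpass]; exact hP' (t*x₀)
  rw [Real.dist_eq, hy]
  have hsplit : (a' + m'*(t*x₀))/t - sInf M*x₀
      = a/t + (-((m - m')*(t*x₀) + (a - a')))/t + (m - sInf M)*x₀ := by
    field_simp
    ring
  rw [hsplit]
  have hb1 : |a/t| ≤ ε/4 := by
    rw [abs_div, abs_of_pos htpos, div_le_iff₀ htpos]
    rw [div_le_iff₀ hε] at ht4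
    linarith
  have hb2 : |(-((m - m')*(t*x₀) + (a - a')))/t| ≤ ε/4 := by
    rw [abs_div, abs_of_pos htpos, abs_neg, div_le_iff₀ htpos]
    linarith [hBabs]
  have hb3 : |(m - sInf M)*x₀| ≤ ε/4 := by
    rw [abs_mul, abs_of_nonneg (by linarith : (0:ℝ) ≤ m - sInf M)]
    have hδx : δ*(4*(|x₀| + 1)) ≤ ε := by
      calc δ*(4*(|x₀| + 1)) ≤ (ε/(4*(|x₀| + 1)))*(4*(|x₀| + 1)) :=
            mul_le_mul_of_nonneg_right hδ3 h4x.le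
        _ = ε := div_mul_cancel₀ _ (ne_of_gt h4x)
    have hms : m - sInf M ≤ δ := by linarith
    have hprod : 0 ≤ (δ - (m - sInf M)) * |x₀| :=
      mul_nonneg (by linarith) (abs_nonneg x₀)
    linarith only [hδx, hprod, hδpos]
  calc |a/t + (-((m - m')*(t*x₀) + (a - a')))/t + (m - sInf M)*x₀|
      ≤ |a/t| + |(-((m - m')*(t*x₀) + (a - a')))/t| + |(m - sInf M)*x₀| :=
        abs_add_three _ _ _
    _ ≤ ε/4 + ε/4 + ε/4 := by linarith
    _ < ε := by linarith
end
end

section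
/- Let a₁ < a₂ and b₁ < b₂ be real numbers. For i = 1, 2 let Rᵢ = {(1−s)·(−1, 2aᵢ, aᵢ) + s·(1, −2bᵢ, bᵢ) : s ∈ (0,1)} be the open Euclidean segment from (−1, 2aᵢ, aᵢ) to (1, −2bᵢ, bᵢ) in ℝ³ (each Rᵢ is a horizontal segment, since (−1, 2aᵢ, aᵢ)⁻¹·(1, −2bᵢ, bᵢ) = (2, −2aᵢ − 2bᵢ, 0)). Then for every p ∈ R₁ and q ∈ R₂, the z-coordinate of p⁻¹·q is nonzero. In particular, no horizontal line meets both R₁ and R₂, and R₁ ∩ R₂ = ∅. -/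
open MeasureTheory Filter

noncomputable section

/-- for `a₁ < a₂` and `b₁ < b₂`, let `Rᵢ` be the open segment from
`(−1, 2aᵢ, aᵢ)` to `(1, −2bᵢ, bᵢ)`.  Then for all `p ∈ R₁`, `q ∈ R₂` the
`z`-coordinate of `p⁻¹q` is nonzero; in particular `R₁ ∩ R₂ = ∅`. -/
theorem no_horizontal_line_between_rulings
    (a₁ a₂ b₁ b₂ : ℝ) (ha : a₁ < a₂) (hb : b₁ < b₂)
    (R₁ R₂ : Set H)
    (hR₁ : R₁ = {p : H | ∃ s ∈ Set.Ioo (0 : ℝ) 1,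
      p = (1 - s) • ((-1, 2 * a₁, a₁) : H) + s • ((1, -2 * b₁, b₁) : H)})
    (hR₂ : R₂ = {p : H | ∃ s ∈ Set.Ioo (0 : ℝ) 1,
      p = (1 - s) • ((-1, 2 * a₂, a₂) : H) + s • ((1, -2 * b₂, b₂) : H)}) :
    (∀ p ∈ R₁, ∀ q ∈ R₂, (Hmul (Hinv p) q).2.2 ≠ 0) ∧ R₁ ∩ R₂ = ∅ := by
  have h1 : ∀ p ∈ R₁, ∀ q ∈ R₂, (Hmul (Hinv p) q).2.2 ≠ 0 := by
    rintro p hp q hq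
    rw [hR₁] at hp; rw [hR₂] at hq
    obtain ⟨s, ⟨hs0, hs1⟩, rfl⟩ := hp
    obtain ⟨t, ⟨ht0, ht1⟩, rfl⟩ := hq
    simp only [Hmul, Hinv, Prod.smul_def, smul_eq_mul, Prod.mk_add_mk, Prod.fst_add,
      Prod.snd_add]
    have key : (0:ℝ) < 2*(1-s)*(1-t)*(a₂-a₁) + 2*s*t*(b₂-b₁) := by
      have h1 := mul_pos (mul_pos (mul_pos (by norm_num : (0:ℝ) < 2)
        (sub_pos.2 hs1)) (sub_pos.2 ht1)) (sub_pos.2 ha)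
      have h2 := mul_pos (mul_pos (mul_pos (by norm_num : (0:ℝ) < 2) hs0) ht0) (sub_pos.2 hb)
      linarith
    intro h
    nlinarith [key, h]
  refine ⟨h1, ?_⟩
  ext p
  simp only [Set.mem_inter_iff, Set.mem_empty_iff_false, iff_false, not_and]
  intro hp1 hp2
  have := h1 p hp1 p hp2
  apply this
  simp [Hmul, Hinv]
  ring
end
end

section
/- Let ρ : ℝ → ℝ be a continuous, strictly increasing, surjective function, and let Σ_ρ = ⋃_{z∈ℝ} [(−1, 2z, z), (1, −2ρ(z), ρ(z))], where [p,q] denotes the closed Euclidean line segment in ℝ³ from p to q. Then the intrinsic projection Π restricted to Σ_ρ is a bijection from Σ_ρ onto K = {(x,0,z) : −1 ≤ x ≤ 1, z ∈ ℝ}; that is, Σ_ρ is an intrinsic graph over K. -/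
open MeasureTheory Filter

noncomputable section

/-- Strict monotonicity of `z ↦ α z + β ρ(z)` for nonneg coefficients not both zero. -/
lemma gmono_aux (ρ : ℝ → ℝ) (hρmono : StrictMono ρ) (α β : ℝ) (hα : 0 ≤ α) (hβ : 0 ≤ β)
    (hs : 0 < α + β) : StrictMono (fun z => α * z + β * ρ z) := by
  intro a b hab
  have h1 : ρ a < ρ b := hρmono hab
  rcases hα.lt_or_eq with h | h
  · have h2 : α * a < α * b := by nlinarith
    have h3 : β * ρ a ≤ β * ρ b := by nlinarith
    simpa using add_lt_add_of_lt_of_le h2 h3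
  · have hβ' : 0 < β := by linarith
    have h2 : β * ρ a < β * ρ b := by nlinarith
    simp only [← h, zero_mul, zero_add]
    exact h2

/-- Surjectivity of `z ↦ α z + β ρ(z)` for nonneg coefficients not both zero. -/
lemma gsurj_aux (ρ : ℝ → ℝ) (hρc : Continuous ρ) (hρmono : StrictMono ρ)
    (hρsurj : Function.Surjective ρ) (α β : ℝ) (hα : 0 ≤ α) (hβ : 0 ≤ β)
    (hs : 0 < α + β) : Function.Surjective (fun z => α * z + β * ρ z) := by
  have hT : Tendsto ρ atTop atTop :=
    tendsto_atTop_atTop_of_monotone hρmono.monotone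
      (fun b => ⟨(hρsurj b).choose, le_of_eq (hρsurj b).choose_spec.symm⟩)
  have hB : Tendsto ρ atBot atBot :=
    tendsto_atBot_atBot_of_monotone hρmono.monotone
      (fun b => ⟨(hρsurj b).choose, le_of_eq (hρsurj b).choose_spec⟩)
  have hcont : Continuous (fun z => α * z + β * ρ z) :=
    (continuous_const.mul continuous_id).add (continuous_const.mul hρc)
  have htop : Tendsto (fun z => α * z + β * ρ z) atTop atTop := by
    rcases hα.lt_or_eq with h | h
    · refine tendsto_atTop_mono' atTop ?_
        (tendsto_atTop_add_const_right atTop (β * ρ 0) (tendsto_id.const_mul_atTop h))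
      filter_upwards [eventually_ge_atTop (0:ℝ)] with z hz
      have h2 := mul_le_mul_of_nonneg_left (hρmono.monotone hz) hβ
      simp only [id_eq]
      linarith
    · have hβ' : 0 < β := by linarith
      have h2 : Tendsto (fun z => β * ρ z) atTop atTop := hT.const_mul_atTop hβ'
      simpa [← h] using h2
  have hbot : Tendsto (fun z => α * z + β * ρ z) atBot atBot := by
    rcases hα.lt_or_eq with h | h
    · refine tendsto_atBot_mono' atBot ?_
        (tendsto_atBot_add_const_right atBot (β * ρ 0) (tendsto_id.const_mul_atBot h))
      filter_upwards [eventually_le_atBot (0:ℝ)] with z hz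
      have h2 := mul_le_mul_of_nonneg_left (hρmono.monotone hz) hβ
      simp only [id_eq]
      linarith
    · have hβ' : 0 < β := by linarith
      have h2 : Tendsto (fun z => β * ρ z) atBot atBot := hB.const_mul_atBot hβ'
      simpa [← h] using h2
  exact hcont.surjective htop hbot

/-- for `ρ` continuous, strictly increasing and surjective, the
ruled surface `Σ_ρ = ⋃_z [(−1, 2z, z), (1, −2ρ(z), ρ(z))]` is an intrinsic graph
over `K`: `Π` restricts to a bijection from `Σ_ρ` onto `K`. -/
theorem sigma_rho_intrinsic_graph
    (ρ : ℝ → ℝ) (hρc : Continuous ρ) (hρmono : StrictMono ρ)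
    (hρsurj : Function.Surjective ρ) :
    Set.BijOn Proj
      (⋃ z : ℝ, segment ℝ ((-1, 2 * z, z) : H) ((1, -2 * ρ z, ρ z) : H)) K := by
  have key : ∀ t z : ℝ,
      Proj ((1 - t) • ((-1, 2 * z, z) : H) + t • ((1, -2 * ρ z, ρ z) : H))
        = (2 * t - 1, 0, 2 * (1 - t) ^ 2 * z + 2 * t ^ 2 * ρ z) := by
    intro t z
    simp only [Prod.smul_mk, smul_eq_mul, Prod.mk_add_mk, Proj]
    refine Prod.ext (by ring) (Prod.ext rfl (by ring))
  refine ⟨?_, ?_, ?_⟩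
  · rintro p hp
    obtain ⟨z, hz⟩ := Set.mem_iUnion.1 hp
    obtain ⟨u, v, hu, hv, huv, rfl⟩ := hz
    have hu1 : u = 1 - v := by linarith
    subst hu1
    rw [key v z]
    exact ⟨rfl, by show (-1:ℝ) ≤ 2 * v - 1; linarith, by show (2 * v - 1 : ℝ) ≤ 1; linarith⟩
  · rintro p hp q hq hpq
    obtain ⟨z, hz⟩ := Set.mem_iUnion.1 hp
    obtain ⟨u, v, hu, hv, huv, rfl⟩ := hz
    obtain ⟨w, hw⟩ := Set.mem_iUnion.1 hq
    obtain ⟨u', v', hu', hv', huv', rfl⟩ := hw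
    have e1 : u = 1 - v := by linarith
    have e2 : u' = 1 - v' := by linarith
    subst e1; subst e2
    rw [key v z, key v' w, Prod.ext_iff, Prod.ext_iff] at hpq
    obtain ⟨h1, h2, h3⟩ := hpq
    have hvv : v = v' := by simp only at h1; linarith
    subst hvv
    have hG := gmono_aux ρ hρmono (2 * (1 - v) ^ 2) (2 * v ^ 2)
      (by positivity) (by positivity) (by nlinarith [sq_nonneg (2 * v - 1)])
    have hzw : z = w := hG.injective (by simpa using h3)
    subst hzw
    rfl
  · rintro ⟨x, y, c⟩ ⟨hp0, hp1, hp2⟩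
    simp only at hp0 hp1 hp2
    subst hp0
    set t := (x + 1) / 2 with ht
    have ht0 : 0 ≤ t := by rw [ht]; linarith
    have ht1 : t ≤ 1 := by rw [ht]; linarith
    obtain ⟨z, hz⟩ := gsurj_aux ρ hρc hρmono hρsurj (2 * (1 - t) ^ 2) (2 * t ^ 2)
      (by positivity) (by positivity) (by nlinarith [sq_nonneg (2 * t - 1)]) c
    refine ⟨(1 - t) • ((-1, 2 * z, z) : H) + t • ((1, -2 * ρ z, ρ z) : H), ?_, ?_⟩
    · exact Set.mem_iUnion.2 ⟨z, ⟨1 - t, t, by linarith, ht0, by ring, rfl⟩⟩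
    · rw [key t z]
      simp only at hz
      refine Prod.ext (by rw [ht]; ring) (Prod.ext rfl ?_)
      simpa using hz
end
end

section
/- Let ρ : ℝ → ℝ be Lipschitz and nondecreasing, with a.e. derivative ρ', and let a < b. Then ∫_a^b √(1 + (z + ρ(z))²)·(∫_{−1}^{1} ((x−1)²/2 + ρ'(z)·(x+1)²/2) dx) dz = (4/3)·∫_a^b √(1 + (z + ρ(z))²)·(1 + ρ'(z)) dz = (4/3)·∫_{a+ρ(a)}^{b+ρ(b)} √(1 + m²) dm. In particular, this quantity depends only on a + ρ(a) and b + ρ(b). -/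
open MeasureTheory Filter

noncomputable section

open Set in
private lemma sigma_rho_inner (c : ℝ) :
    (∫ x in (-1:ℝ)..1, ((x - 1) ^ 2 / 2 + c * (x + 1) ^ 2 / 2)) = 4/3 * (1 + c) := by
  have h : ∀ x ∈ Set.uIcc (-1:ℝ) 1, HasDerivAt (fun x : ℝ => (x-1)^3/6 + c*(x+1)^3/6)
      ((x - 1) ^ 2 / 2 + c * (x + 1) ^ 2 / 2) x := by
    intro x _
    have : HasDerivAt (fun x : ℝ => (x-1)^3/6 + c*(x+1)^3/6)
        (3*(x-1)^2/6 + c*(3*(x+1)^2)/6) x := by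
      apply HasDerivAt.add
      · exact (((hasDerivAt_id x).sub_const 1).pow 3).div_const 6 |>.congr_deriv
          (by simp only [id_eq]; ring)
      · exact ((((hasDerivAt_id x).add_const 1).pow 3).const_mul c).div_const 6 |>.congr_deriv
          (by simp only [id_eq]; ring)
    exact this.congr_deriv (by ring)
  rw [intervalIntegral.integral_eq_sub_of_hasDerivAt h (by
    apply Continuous.intervalIntegrable; continuity)]
  norm_num
  ring

open Set in
private lemma sigma_rho_subst
    (ρ ρ' : ℝ → ℝ) (Kρ : NNReal) (hρLip : LipschitzWith Kρ ρ) (hρmono : Monotone ρ)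
    (hρ' : ∀ᵐ z : ℝ ∂volume, HasDerivAt ρ (ρ' z) z)
    (a b : ℝ) (hab : a < b) :
    (∫ z in a..b, Real.sqrt (1 + (z + ρ z) ^ 2) * (1 + ρ' z))
      = ∫ m in (a + ρ a)..(b + ρ b), Real.sqrt (1 + m ^ 2) := by
  set g : ℝ → ℝ := fun z => z + ρ z with hg
  set g' : ℝ → ℝ := fun z => 1 + ρ' z with hg'
  have hgsm : StrictMono g := fun x y hxy => by
    simpa [g] using add_lt_add_of_lt_of_le hxy (hρmono hxy.le)
  have hglip : LipschitzWith (1 + Kρ) g := (LipschitzWith.id.add hρLip)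
  have hgcont : Continuous g := hglip.continuous
  -- a.e. derivative of g
  have hgd : ∀ᵐ z : ℝ ∂volume, HasDerivAt g (g' z) z := by
    filter_upwards [hρ'] with z hz using (hasDerivAt_id z).add hz
  -- measurable null superset
  obtain ⟨N, hNsub, hNm, hN0⟩ := exists_measurable_superset_of_null (ae_iff.mp hgd)
  set s : Set ℝ := Ioo a b \ N with hs
  have hsm : MeasurableSet s := measurableSet_Ioo.diff hNm
  have hsd : ∀ z ∈ s, HasDerivAt g (g' z) z := by
    intro z hz
    by_contra h
    exact hz.2 (hNsub h)
  -- ρ' nonneg on s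
  have hnonneg : ∀ z ∈ s, 0 ≤ ρ' z := by
    intro z hz
    have hd : HasDerivAt ρ (ρ' z) z := by
      have := hsd z hz
      have h2 : HasDerivAt (fun w => g w - w) (g' z - 1) z := this.sub (hasDerivAt_id z)
      simpa [g, g'] using h2
    have ht : Tendsto (slope ρ z) (nhdsWithin z (Ioi z)) (nhds (ρ' z)) :=
      (hasDerivAt_iff_tendsto_slope.mp hd).mono_left
        (nhdsWithin_mono z (fun y hy => ne_of_gt hy))
    refine ge_of_tendsto ht ?_
    filter_upwards [self_mem_nhdsWithin] with y hy
    have : (0:ℝ) ≤ ρ y - ρ z := sub_nonneg.mpr (hρmono (le_of_lt hy))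
    have h0 : (0:ℝ) ≤ (ρ y - ρ z) / (y - z) := div_nonneg this (sub_nonneg.mpr hy.le)
    simpa [slope_def_field] using h0
  -- change of variables
  have hinj : InjOn g s := hgsm.injective.injOn
  have key := integral_image_eq_integral_abs_deriv_smul hsm
    (fun z hz => (hsd z hz).hasDerivWithinAt) hinj (fun m => Real.sqrt (1 + m ^ 2))
  -- images
  have himg : g '' (Ioo a b) = Ioo (g a) (g b) := by
    apply Subset.antisymm
    · rintro _ ⟨x, hx, rfl⟩
      exact ⟨hgsm hx.1, hgsm hx.2⟩
    · exact intermediate_value_Ioo hab.le hgcont.continuousOn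
  -- Lipschitz maps null sets to null sets
  have hnullimg : volume (g '' (Ioo a b ∩ N)) = 0 := by
    have h1 : μH[1] (g '' (Ioo a b ∩ N)) ≤ (1 + Kρ : NNReal) ^ (1:ℝ) * μH[1] (Ioo a b ∩ N) :=
      hglip.hausdorffMeasure_image_le zero_le_one _
    rw [MeasureTheory.hausdorffMeasure_real] at h1
    have h3 : volume (Ioo a b ∩ N) = 0 := measure_mono_null inter_subset_right hN0
    rw [h3, mul_zero] at h1
    exact le_antisymm h1 (zero_le (a := _))
  have haeq : g '' s =ᵐ[volume] Ioo (g a) (g b) := by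
    rw [← himg]
    refine (MeasureTheory.ae_eq_set).mpr ⟨?_, ?_⟩
    · have : g '' s \ g '' (Ioo a b) = ∅ := by
        apply diff_eq_empty.mpr
        exact image_mono (f := g) diff_subset
      simp [this]
    · apply measure_mono_null _ hnullimg
      rintro y ⟨⟨x, hx, rfl⟩, hy⟩
      refine ⟨x, ⟨hx, ?_⟩, rfl⟩
      by_contra hxN
      exact hy ⟨x, ⟨hx, hxN⟩, rfl⟩
  have hseq : s =ᵐ[volume] Ioo a b := by
    refine (MeasureTheory.ae_eq_set).mpr ⟨by simp [hs], ?_⟩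
    apply measure_mono_null _ hN0
    rintro x ⟨hx1, hx2⟩
    by_contra hxN
    exact hx2 ⟨hx1, hxN⟩
  have hgab : g a ≤ g b := (hgsm hab).le
  calc ∫ z in a..b, Real.sqrt (1 + (z + ρ z) ^ 2) * (1 + ρ' z)
      = ∫ z in Ioo a b, Real.sqrt (1 + (g z) ^ 2) * (g' z) := by
        rw [intervalIntegral.integral_of_le hab.le, integral_Ioc_eq_integral_Ioo]
    _ = ∫ z in s, Real.sqrt (1 + (g z) ^ 2) * (g' z) := (setIntegral_congr_set hseq).symm
    _ = ∫ z in s, |g' z| • Real.sqrt (1 + (g z) ^ 2) := by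
        apply setIntegral_congr_fun hsm
        intro z hz
        have h1 := hnonneg z hz
        have h0 : 0 ≤ g' z := by simp only [g']; linarith
        simp [abs_of_nonneg h0, smul_eq_mul, mul_comm]
    _ = ∫ m in g '' s, Real.sqrt (1 + m ^ 2) := key.symm
    _ = ∫ m in Ioo (g a) (g b), Real.sqrt (1 + m ^ 2) := setIntegral_congr_set haeq
    _ = ∫ m in (a + ρ a)..(b + ρ b), Real.sqrt (1 + m ^ 2) := by
        rw [intervalIntegral.integral_of_le hgab, integral_Ioc_eq_integral_Ioo]

/-- the area of the portion of `Σ_ρ` over `a ≤ z ≤ b`: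
`∫_a^b √(1+(z+ρ(z))²) (∫_{−1}^1 ((x−1)²/2 + ρ'(z)(x+1)²/2) dx) dz
  = (4/3) ∫_a^b √(1+(z+ρ(z))²)(1+ρ'(z)) dz
  = (4/3) ∫_{a+ρ(a)}^{b+ρ(b)} √(1+m²) dm`. -/
theorem sigma_rho_area
    (ρ ρ' : ℝ → ℝ) (Kρ : NNReal) (hρLip : LipschitzWith Kρ ρ) (hρmono : Monotone ρ)
    (hρ' : ∀ᵐ z : ℝ ∂volume, HasDerivAt ρ (ρ' z) z) (hρ'm : Measurable ρ')
    (a b : ℝ) (hab : a < b) :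
    (∫ z in a..b, Real.sqrt (1 + (z + ρ z) ^ 2) *
          (∫ x in (-1 : ℝ)..1, ((x - 1) ^ 2 / 2 + ρ' z * (x + 1) ^ 2 / 2)))
        = (4 / 3) * ∫ z in a..b, Real.sqrt (1 + (z + ρ z) ^ 2) * (1 + ρ' z)
      ∧ (4 / 3) * (∫ z in a..b, Real.sqrt (1 + (z + ρ z) ^ 2) * (1 + ρ' z))
        = (4 / 3) * ∫ m in (a + ρ a)..(b + ρ b), Real.sqrt (1 + m ^ 2) := by
  constructor
  · have h : ∀ z : ℝ, Real.sqrt (1 + (z + ρ z) ^ 2) *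
        (∫ x in (-1 : ℝ)..1, ((x - 1) ^ 2 / 2 + ρ' z * (x + 1) ^ 2 / 2))
        = 4 / 3 * (Real.sqrt (1 + (z + ρ z) ^ 2) * (1 + ρ' z)) := by
      intro z
      rw [sigma_rho_inner (ρ' z)]
      ring
    simp_rw [h]
    rw [intervalIntegral.integral_const_mul]
  · rw [sigma_rho_subst ρ ρ' Kρ hρLip hρmono hρ' a b hab]
end
end
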